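/- arXiv:1011.5953 — 8 statements merged into one kernel-verified Lean document; each statement's English description precedes it below -/
import Mathlib

section
/- If H ≤ K ≤ G where G is a finitely generated group with word metric, and H has bounded packing in G, then H has bounded packing in K (with respect to the restriction of the metric to K). -/
open Pointwise

/-- `d` is the word metric on `G` associated to some finite generating set. -/
def IsWordMetric {G : Type*} [Group G] (d : G → G → ℝ) : Prop :=
  ∃ S : Finset G, Subgroup.closure (S : Set G) = ⊤ ∧
    ∀ g h : G, d g h = sInf {x : ℝ | ∃ l : List G,
      (∀ w ∈ l, w ∈ S ∨ w⁻¹ ∈ S) ∧ l.prod = g⁻¹ * h ∧ (l.length : ℝ) = x}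

/-- `H` has bounded packing in `G` with respect to the distance function `d`:
for every `r > 0` there is `N` such that any `N` distinct left cosets of `H`
contain a pair of cosets at distance at least `r`. -/
def BoundedPacking {G : Type*} [Group G] (d : G → G → ℝ) (H : Subgroup G) : Prop :=
  ∀ r : ℝ, 0 < r → ∃ N : ℕ, ∀ C : Finset (Set G),
    (∀ X ∈ C, ∃ g : G, X = g • (H : Set G)) → N ≤ C.card →
    ∃ X ∈ C, ∃ Y ∈ C, X ≠ Y ∧ ∀ x ∈ X, ∀ y ∈ Y, r ≤ d x y

theorem bounded_packing_of_le {G : Type*} [Group G] (d : G → G → ℝ)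
    (hd : IsWordMetric d) (H K : Subgroup G) (hHK : H ≤ K)
    (hBP : BoundedPacking d H) :
    BoundedPacking (fun a b : K => d a b) (H.subgroupOf K) := by
  intro r hr
  obtain ⟨N, hN⟩ := hBP r hr
  refine ⟨N, ?_⟩
  intro C hC hcard
  classical
  -- the pushforward map
  set f : Set K → Set G := fun X => ⋃ x ∈ X, (x : G) • (H : Set G) with hf
  have key : ∀ X ∈ C, ∀ k : K, X = k • ((H.subgroupOf K : Subgroup K) : Set K) →
      f X = (k : G) • (H : Set G) := by
    intro X _ k hXk
    subst hXk
    apply Set.eq_of_subset_of_subset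
    · simp only [f, Set.iUnion_subset_iff]
      intro x hx
      obtain ⟨h, hh, rfl⟩ := hx
      have hhH : (h : G) ∈ H := hh
      have : ((k • h : K) : G) • (H : Set G) = (k : G) • ((h : G) • (H : Set G)) := by
        rw [smul_eq_mul]; push_cast; rw [smul_smul]
      rw [this, smul_coe_set hhH]
    · intro y hy
      have hk : k ∈ k • ((H.subgroupOf K : Subgroup K) : Set K) := by
        refine ⟨1, one_mem _, by simp⟩
      refine Set.mem_iUnion.2 ⟨k, Set.mem_iUnion.2 ⟨hk, hy⟩⟩
  have hinj : Set.InjOn f C := by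
    intro X hX Y hY hfXY
    obtain ⟨k1, hk1⟩ := hC X hX
    obtain ⟨k2, hk2⟩ := hC Y hY
    rw [key X hX k1 hk1, key Y hY k2 hk2] at hfXY
    rw [hk1, hk2]
    rw [leftCoset_eq_iff] at hfXY ⊢
    exact hfXY
  have hCimg : ∀ X ∈ C.image f, ∃ g : G, X = g • (H : Set G) := by
    intro X hX
    obtain ⟨Y, hY, rfl⟩ := Finset.mem_image.1 hX
    obtain ⟨k, hk⟩ := hC Y hY
    exact ⟨k, key Y hY k hk⟩
  have hcard' : N ≤ (C.image f).card := by
    rwa [Finset.card_image_of_injOn hinj]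
  obtain ⟨X', hX', Y', hY', hne, hdist⟩ := hN (C.image f) hCimg hcard'
  obtain ⟨X, hX, rfl⟩ := Finset.mem_image.1 hX'
  obtain ⟨Y, hY, rfl⟩ := Finset.mem_image.1 hY'
  have hmem : ∀ (Z : Set K) (x : K), x ∈ Z → (x : G) ∈ f Z := by
    intro Z x hx
    refine Set.mem_iUnion.2 ⟨x, Set.mem_iUnion.2 ⟨hx, ⟨1, one_mem _, by simp⟩⟩⟩
  exact ⟨X, hX, Y, hY, fun h => hne (by rw [h]),
    fun x hx y hy => hdist _ (hmem X x hx) _ (hmem Y y hy)⟩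
end

section
/- If H ≤ K ≤ G, H has bounded packing in K, and K has bounded packing in G, then H has bounded packing in G. -/
open Pointwise

theorem bounded_packing_trans {G : Type*} [Group G] (d : G → G → ℝ)
    (hd : IsWordMetric d) (H K : Subgroup G) (hHK : H ≤ K)
    (h1 : BoundedPacking (fun a b : K => d a b) (H.subgroupOf K))
    (h2 : BoundedPacking d K) :
    BoundedPacking d H := by
  classical
  -- the word metric is left invariant
  have dinv : ∀ g x y : G, d (g * x) (g * y) = d x y := by
    obtain ⟨S, -, hform⟩ := hd
    intro g x y
    have key : (g * x)⁻¹ * (g * y) = x⁻¹ * y := by group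
    rw [hform, hform, key]
  intro r hr
  obtain ⟨N₂, hN₂⟩ := h2 r hr
  obtain ⟨N₁, hN₁⟩ := h1 r hr
  refine ⟨(N₁ + 1) * (N₂ + 1), fun C hC hcard => ?_⟩
  by_contra hcon
  push_neg at hcon
  -- choose a representative for each coset in C
  have gg : ∀ X : Set G, ∃ g : G, X ∈ C → X = g • (H : Set G) := by
    intro X
    by_cases hX : X ∈ C
    · obtain ⟨g, hg⟩ := hC X hX
      exact ⟨g, fun _ => hg⟩
    · exact ⟨1, fun h => absurd h hX⟩
  choose g hg using gg
  set f : Set G → Set G := fun X => g X • (K : Set G) with hf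
  have hsub : ∀ X ∈ C, X ⊆ f X := by
    intro X hX x hx
    rw [hg X hX] at hx
    rw [mem_leftCoset_iff] at hx ⊢
    exact hHK hx
  set D : Finset (Set G) := C.image f with hD
  have hDcoset : ∀ Y ∈ D, ∃ g' : G, Y = g' • (K : Set G) := by
    intro Y hY
    obtain ⟨X, hX, rfl⟩ := Finset.mem_image.mp hY
    exact ⟨g X, rfl⟩
  have hDsmall : D.card < N₂ := by
    by_contra hge
    push_neg at hge
    obtain ⟨X', hX', Y', hY', hne, hfar⟩ := hN₂ D hDcoset hge
    obtain ⟨X, hX, rfl⟩ := Finset.mem_image.mp hX'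
    obtain ⟨Y, hY, rfl⟩ := Finset.mem_image.mp hY'
    have hXY : X ≠ Y := fun h => hne (by rw [h])
    obtain ⟨x, hx, y, hy, hlt⟩ := hcon X hX Y hY hXY
    exact absurd (hfar x (hsub X hX hx) y (hsub Y hY hy)) (not_le.mpr hlt)
  have hmaps : ∀ X ∈ C, f X ∈ D := fun X hX => Finset.mem_image_of_mem f hX
  have hlt2 : D.card * N₁ < C.card := by nlinarith [hDsmall, hcard, Nat.zero_le N₁]
  obtain ⟨E, hE, hfib⟩ :=
    Finset.exists_lt_card_fiber_of_mul_lt_card_of_maps_to hmaps hlt2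
  obtain ⟨X₀, hX₀, hfX₀⟩ := Finset.mem_image.mp hE
  set g₀ : G := g X₀ with hg₀
  set F : Finset (Set G) := C.filter (fun X => f X = E) with hF
  have hFC : ∀ X ∈ F, X ∈ C := fun X hX => (Finset.mem_filter.mp hX).1
  have hmemK : ∀ X ∈ F, g₀⁻¹ * g X ∈ K := by
    intro X hX
    have h2' : f X₀ = f X := by
      rw [hfX₀, (Finset.mem_filter.mp hX).2]
    exact (leftCoset_eq_iff K).mp h2'
  set φ : Set G → Set K := fun X =>
    if h : g₀⁻¹ * g X ∈ K then
      ((⟨g₀⁻¹ * g X, h⟩ : K) • ((H.subgroupOf K : Subgroup K) : Set K)) else ∅ with hφ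
  have hφF : ∀ (X : Set G) (hX : X ∈ F),
      φ X = (⟨g₀⁻¹ * g X, hmemK X hX⟩ : K) • ((H.subgroupOf K : Subgroup K) : Set K) := by
    intro X hX
    simp only [hφ, dif_pos (hmemK X hX)]
  set C' : Finset (Set K) := F.image φ with hC'def
  have hC' : ∀ Z ∈ C', ∃ k : K, Z = k • ((H.subgroupOf K : Subgroup K) : Set K) := by
    intro Z hZ
    obtain ⟨X, hX, rfl⟩ := Finset.mem_image.mp hZ
    exact ⟨_, hφF X hX⟩
  have hinj : Set.InjOn φ F := by
    intro X hX Y hY hXY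
    rw [hφF X hX, hφF Y hY] at hXY
    rw [leftCoset_eq_iff] at hXY
    rw [Subgroup.mem_subgroupOf] at hXY
    have hval : (((⟨g₀⁻¹ * g X, hmemK X hX⟩ : K))⁻¹ * (⟨g₀⁻¹ * g Y, hmemK Y hY⟩ : K) : K)
        = ((g X)⁻¹ * g Y : G) := by
      push_cast
      group
    rw [hval] at hXY
    rw [hg X (hFC X hX), hg Y (hFC Y hY), leftCoset_eq_iff]
    exact hXY
  have hcard' : N₁ ≤ C'.card := by
    rw [hC'def, Finset.card_image_of_injOn hinj]
    exact le_of_lt hfib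
  obtain ⟨Z, hZ, W, hW, hZW, hfar⟩ := hN₁ C' hC' hcard'
  obtain ⟨X, hX, rfl⟩ := Finset.mem_image.mp hZ
  obtain ⟨Y, hY, rfl⟩ := Finset.mem_image.mp hW
  have hXY : X ≠ Y := fun h => hZW (by rw [h])
  obtain ⟨x, hx, y, hy, hlt⟩ := hcon X (hFC X hX) Y (hFC Y hY) hXY
  have hxH : (g X)⁻¹ * x ∈ H := by
    rw [hg X (hFC X hX), mem_leftCoset_iff] at hx; exact hx
  have hyH : (g Y)⁻¹ * y ∈ H := by
    rw [hg Y (hFC Y hY), mem_leftCoset_iff] at hy; exact hy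
  have hxK : g₀⁻¹ * x ∈ K := by
    have : g₀⁻¹ * x = (g₀⁻¹ * g X) * ((g X)⁻¹ * x) := by group
    rw [this]
    exact mul_mem (hmemK X hX) (hHK hxH)
  have hyK : g₀⁻¹ * y ∈ K := by
    have : g₀⁻¹ * y = (g₀⁻¹ * g Y) * ((g Y)⁻¹ * y) := by group
    rw [this]
    exact mul_mem (hmemK Y hY) (hHK hyH)
  have hpx : (⟨g₀⁻¹ * x, hxK⟩ : K) ∈ φ X := by
    rw [hφF X hX, mem_leftCoset_iff, SetLike.mem_coe, Subgroup.mem_subgroupOf]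
    have hval : (((⟨g₀⁻¹ * g X, hmemK X hX⟩ : K))⁻¹ * (⟨g₀⁻¹ * x, hxK⟩ : K) : K)
        = ((g X)⁻¹ * x : G) := by push_cast; group
    rw [hval]
    exact hxH
  have hpy : (⟨g₀⁻¹ * y, hyK⟩ : K) ∈ φ Y := by
    rw [hφF Y hY, mem_leftCoset_iff, SetLike.mem_coe, Subgroup.mem_subgroupOf]
    have hval : (((⟨g₀⁻¹ * g Y, hmemK Y hY⟩ : K))⁻¹ * (⟨g₀⁻¹ * y, hyK⟩ : K) : K)
        = ((g Y)⁻¹ * y : G) := by push_cast; group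
    rw [hval]
    exact hyH
  have := hfar _ hpx _ hpy
  simp only at this
  rw [dinv g₀⁻¹ x y] at this
  exact absurd this (not_le.mpr hlt)
end

section
/- Every normal subgroup of a finitely generated group has bounded packing. -/
open Pointwise

/-- The ball of radius `k` (products of at most `k` elements of `T`) is finite. -/
lemma finite_ball {Q : Type*} [Group Q] (T : Set Q) (hT : T.Finite) (k : ℕ) :
    {x : Q | ∃ l : List Q, (∀ w ∈ l, w ∈ T) ∧ l.length ≤ k ∧ l.prod = x}.Finite := by
  induction k with
  | zero =>
    apply Set.Finite.subset (Set.finite_singleton (1 : Q))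
    rintro x ⟨l, -, hlen, hprod⟩
    have : l = [] := List.length_eq_zero_iff.mp (Nat.le_zero.mp hlen)
    subst this
    simp only [List.prod_nil] at hprod
    simp [← hprod]
  | succ k ih =>
    apply Set.Finite.subset ((Set.finite_singleton (1 : Q)).union (hT.mul ih))
    rintro x ⟨l, hmem, hlen, hprod⟩
    cases l with
    | nil =>
      left
      simp only [List.prod_nil] at hprod
      simp [← hprod]
    | cons a l' =>
      right
      refine ⟨a, hmem a List.mem_cons_self, l'.prod,
        ⟨l', fun w hw => hmem w (List.mem_cons_of_mem _ hw), ?_, rfl⟩, ?_⟩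
      · simp only [List.length_cons] at hlen; omega
      · simpa using hprod

theorem bounded_packing_of_normal {G : Type*} [Group G] (d : G → G → ℝ)
    (hd : IsWordMetric d) (N : Subgroup G) [N.Normal] :
    BoundedPacking d N := by
  classical
  obtain ⟨S, hgen, hdist⟩ := hd
  intro r hr
  set Q := G ⧸ N
  set π : G →* Q := QuotientGroup.mk' N with hπ
  set T : Set Q := π '' ((S : Set G) ∪ (S : Set G)⁻¹) with hT
  have hTfin : T.Finite := (S.finite_toSet.union S.finite_toSet.inv).image _
  set k : ℕ := ⌈r⌉₊ with hk
  set B : Set Q :=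
    {x : Q | ∃ l : List Q, (∀ w ∈ l, w ∈ T) ∧ l.length ≤ k ∧ l.prod = x} with hB
  have hBfin : B.Finite := finite_ball T hTfin k
  refine ⟨hBfin.toFinset.card + 1, ?_⟩
  intro C hC hcard
  by_contra hcon
  push_neg at hcon
  -- every pair of distinct cosets in C is close
  have hclose : ∀ X ∈ C, ∀ Y ∈ C, X ≠ Y → ∃ x ∈ X, ∃ y ∈ Y, d x y < r := by
    intro X hX Y hY hXY
    exact hcon X hX Y hY hXY
  -- pick a base coset
  have hCne : C.Nonempty := Finset.card_pos.mp (by omega)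
  obtain ⟨X₀, hX₀⟩ := hCne
  -- representative function
  have hrep : ∀ X ∈ C, ∃ g : G, X = g • (N : Set G) := hC
  set rep : Set G → G := fun X =>
    if h : ∃ g : G, X = g • (N : Set G) then Classical.choose h else 1 with hrepdef
  have hrepspec : ∀ X ∈ C, X = rep X • (N : Set G) := by
    intro X hX
    have h := hrep X hX
    simp only [hrepdef, dif_pos h]
    exact Classical.choose_spec h
  -- key: if x ∈ X then π x = π (rep X)
  have hmemπ : ∀ X ∈ C, ∀ x ∈ X, π x = π (rep X) := by
    intro X hX x hx
    rw [hrepspec X hX] at hx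
    obtain ⟨n, hn, hxn⟩ := hx
    have : x = rep X * n := by simpa [smul_eq_mul] using hxn.symm
    subst this
    simp only [map_mul]
    have : π n = 1 := (QuotientGroup.eq_one_iff n).mpr hn
    rw [this, mul_one]
  -- if two cosets are close, the quotient difference lies in B
  have hdiff : ∀ X ∈ C, ∀ Y ∈ C, X ≠ Y → (π (rep X))⁻¹ * π (rep Y) ∈ B := by
    intro X hX Y hY hXY
    obtain ⟨x, hx, y, hy, hxy⟩ := hclose X hX Y hY hXY
    rw [hdist x y] at hxy
    set A : Set ℝ := {t : ℝ | ∃ l : List G,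
      (∀ w ∈ l, w ∈ S ∨ w⁻¹ ∈ S) ∧ l.prod = x⁻¹ * y ∧ (l.length : ℝ) = t} with hA
    have hAne : A.Nonempty := by
      have hmem : x⁻¹ * y ∈ Subgroup.closure (S : Set G) := hgen ▸ Subgroup.mem_top _
      have hmem' : x⁻¹ * y ∈ Submonoid.closure ((S : Set G) ∪ (S : Set G)⁻¹) := by
        have := Subgroup.closure_toSubmonoid (S : Set G)
        rw [← Subgroup.mem_toSubmonoid, this] at hmem
        exact hmem
      obtain ⟨l, hl, hlprod⟩ := Submonoid.exists_list_of_mem_closure hmem'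
      refine ⟨(l.length : ℝ), l, fun w hw => ?_, hlprod, rfl⟩
      rcases hl w hw with h | h
      · exact Or.inl h
      · exact Or.inr (by simpa using h)
    have hAbdd : BddBelow A := by
      refine ⟨0, fun t ht => ?_⟩
      obtain ⟨l, -, -, hlen⟩ := ht
      rw [← hlen]
      positivity
    obtain ⟨t, ht, htlt⟩ := (csInf_lt_iff hAbdd hAne).mp hxy
    obtain ⟨l, hl, hlprod, hlen⟩ := ht
    refine ⟨l.map π, ?_, ?_, ?_⟩
    · intro w hw
      obtain ⟨v, hv, rfl⟩ := List.mem_map.mp hw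
      refine ⟨v, ?_, rfl⟩
      rcases hl v hv with h | h
      · exact Or.inl h
      · exact Or.inr (by simpa using h)
    · rw [List.length_map]
      have h1 : (l.length : ℝ) < r := hlen ▸ htlt
      have h2 : r ≤ (k : ℝ) := Nat.le_ceil r
      exact_mod_cast h1.trans_le h2 |>.le
    · rw [← map_list_prod π l, hlprod, map_mul, map_inv, hmemπ X hX x hx, hmemπ Y hY y hy]
  -- the map into the finite ball
  set F : Set G → Q := fun X => (π (rep X₀))⁻¹ * π (rep X) with hF
  have hFmem : ∀ X ∈ C, F X ∈ hBfin.toFinset := by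
    intro X hX
    rw [Set.Finite.mem_toFinset]
    by_cases h : X = X₀
    · subst h
      simp only [hF, inv_mul_cancel]
      exact ⟨[], by simp, by simp, by simp⟩
    · exact hdiff X₀ hX₀ X hX (Ne.symm h)
  have hFinj : Set.InjOn F C := by
    intro X hX Y hY hFeq
    have hππ : π (rep X) = π (rep Y) := by
      simpa [hF] using mul_left_cancel hFeq
    have : rep X • (N : Set G) = rep Y • (N : Set G) := by
      rw [leftCoset_eq_iff]
      exact (QuotientGroup.eq ).mp (by exact hππ)
    rw [hrepspec X hX, hrepspec Y hY, this]
  have := Finset.card_le_card_of_injOn F hFmem hFinj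
  omega
end

section
/- For every linear map φ on ℝⁿ and every δ > 0, there exists a norm on ℝⁿ (equivalent to the Euclidean norm) such that the operator norm of φ with respect to that norm is less than ρ(φ) + δ. -/
open Filter Finset

section aux

variable {n : ℕ}

/-- complexification of a real vector, as Euclidean space element -/
noncomputable def cvec (v : EuclideanSpace ℝ (Fin n)) : EuclideanSpace ℂ (Fin n) :=
  (WithLp.equiv 2 (Fin n → ℂ)).symm (fun i => ((WithLp.equiv 2 (Fin n → ℝ) v) i : ℂ))

lemma norm_cvec (v : EuclideanSpace ℝ (Fin n)) : ‖cvec v‖ = ‖v‖ := by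
  simp [cvec, EuclideanSpace.norm_eq]

lemma key_bound (B : Matrix (Fin n) (Fin n) ℝ) (v : EuclideanSpace ℝ (Fin n)) :
    ‖(WithLp.equiv 2 (Fin n → ℝ)).symm (B.mulVec (WithLp.equiv 2 (Fin n → ℝ) v))‖
      ≤ ‖Matrix.toEuclideanCLM (𝕜 := ℂ) (n := Fin n) (B.map Complex.ofRealHom)‖ * ‖v‖ := by
  have h1 : Matrix.toEuclideanCLM (𝕜 := ℂ) (n := Fin n) (B.map Complex.ofRealHom) (cvec v)
      = (WithLp.equiv 2 (Fin n → ℂ)).symm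
          ((B.map Complex.ofRealHom).mulVec (fun i => ((WithLp.equiv 2 (Fin n → ℝ) v) i : ℂ))) := by
    rw [cvec, WithLp.equiv_symm_apply, Matrix.toEuclideanCLM_toLp]
  have h2 : ((B.map Complex.ofRealHom).mulVec (fun i => ((WithLp.equiv 2 (Fin n → ℝ) v) i : ℂ)))
      = fun i => ((B.mulVec (WithLp.equiv 2 (Fin n → ℝ) v)) i : ℂ) := by
    funext i
    simp only [Matrix.mulVec, dotProduct, Matrix.map_apply]
    push_cast
    rfl
  have h3 : ‖Matrix.toEuclideanCLM (𝕜 := ℂ) (n := Fin n) (B.map Complex.ofRealHom) (cvec v)‖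
      = ‖(WithLp.equiv 2 (Fin n → ℝ)).symm (B.mulVec (WithLp.equiv 2 (Fin n → ℝ) v))‖ := by
    rw [h1, h2]
    simp [EuclideanSpace.norm_eq]
  calc ‖(WithLp.equiv 2 (Fin n → ℝ)).symm (B.mulVec (WithLp.equiv 2 (Fin n → ℝ) v))‖
      = ‖Matrix.toEuclideanCLM (𝕜 := ℂ) (n := Fin n) (B.map Complex.ofRealHom) (cvec v)‖ := h3.symm
    _ ≤ ‖Matrix.toEuclideanCLM (𝕜 := ℂ) (n := Fin n) (B.map Complex.ofRealHom)‖ * ‖cvec v‖ :=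
        ContinuousLinearMap.le_opNorm _ _
    _ = _ := by rw [norm_cvec]

end aux

/-- For every linear map `φ` on `ℝⁿ` (given by a matrix `A`) with spectral radius
`ρ` (the maximal absolute value of a complex eigenvalue), and every `δ > 0`, there
is a norm on `ℝⁿ`, equivalent to the Euclidean norm, for which the operator norm
of `φ` is less than `ρ + δ`. -/
theorem exists_adapted_norm {n : ℕ} (A : Matrix (Fin n) (Fin n) ℝ) (ρ δ : ℝ)
    (hρ : IsGreatest {x : ℝ | ∃ μ : ℂ, Module.End.HasEigenvalue
      (Matrix.toLin' (A.map (fun t : ℝ => (t : ℂ)))) μ ∧ ‖μ‖ = x} ρ)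
    (hδ : 0 < δ) :
    ∃ N : Seminorm ℝ (EuclideanSpace ℝ (Fin n)), (∃ C : ℝ, 0 < C ∧
        ∀ v : EuclideanSpace ℝ (Fin n), C⁻¹ * ‖v‖ ≤ N v ∧ N v ≤ C * ‖v‖) ∧
      ∀ v : EuclideanSpace ℝ (Fin n), N v = 1 →
        N (WithLp.toLp 2 (A.mulVec (v : Fin n → ℝ))) < ρ + δ := by
  classical
  have hρ0 : 0 ≤ ρ := by
    obtain ⟨μ, -, h⟩ := hρ.1
    exact h ▸ (norm_nonneg μ)
  set r : ℝ := ρ + δ / 2 with hr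
  have hrpos : 0 < r := by positivity
  have hρr : ρ < r := by simp [hr]; linarith
  set Aℂ : Matrix (Fin n) (Fin n) ℂ := A.map Complex.ofRealHom with hAℂdef
  have hAℂeq : Aℂ = A.map (fun t : ℝ => (t : ℂ)) := rfl
  set T : EuclideanSpace ℂ (Fin n) →L[ℂ] EuclideanSpace ℂ (Fin n) :=
    Matrix.toEuclideanCLM (𝕜 := ℂ) (n := Fin n) Aℂ with hT
  -- every element of the spectrum of T has norm ≤ ρ
  have hspec : ∀ μ ∈ spectrum ℂ T, ‖μ‖ ≤ ρ := by
    intro μ hμ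
    rw [hT, AlgEquiv.spectrum_eq (Matrix.toEuclideanCLM (𝕜 := ℂ) (n := Fin n)) Aℂ,
      ← AlgEquiv.spectrum_eq (Matrix.toLinAlgEquiv' (R := ℂ) (n := Fin n)) Aℂ] at hμ
    have : Module.End.HasEigenvalue (Matrix.toLin' Aℂ) μ := by
      apply Module.End.hasEigenvalue_iff_mem_spectrum.mpr
      convert hμ using 2 <;> rfl
    exact hρ.2 ⟨μ, hAℂeq ▸ this, rfl⟩
  -- spectral radius bound
  have hsr : spectralRadius ℂ T ≤ ENNReal.ofReal ρ := by
    rw [spectralRadius]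
    refine iSup₂_le fun μ hμ => ?_
    rw [← ENNReal.ofReal_coe_nnreal, coe_nnnorm]
    exact ENNReal.ofReal_le_ofReal (hspec μ hμ)
  have hsrlt : spectralRadius ℂ T < ENNReal.ofReal r :=
    lt_of_le_of_lt hsr (by rwa [ENNReal.ofReal_lt_ofReal_iff hrpos])
  -- Gelfand's formula: find k ≥ 1 with ‖T ^ k‖ ≤ r ^ k
  obtain ⟨k, hk1, hklt⟩ : ∃ k : ℕ, 1 ≤ k ∧
      ((‖T ^ k‖₊ : ENNReal) ^ (1 / (k : ℝ))) < ENNReal.ofReal r := by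
    have := (spectrum.pow_nnnorm_pow_one_div_tendsto_nhds_spectralRadius T).eventually_lt_const
      hsrlt
    obtain ⟨m, hm⟩ := (this.and (eventually_ge_atTop 1)).exists
    exact ⟨m, hm.2, hm.1⟩
  have hTk : ‖T ^ k‖ ≤ r ^ k := by
    have hkpos : (0 : ℝ) < k := by exact_mod_cast hk1
    have h1 : ((‖T ^ k‖₊ : ENNReal) ^ (1 / (k : ℝ))) ^ (k : ℝ) <
        (ENNReal.ofReal r) ^ (k : ℝ) := ENNReal.rpow_lt_rpow hklt hkpos
    rw [← ENNReal.rpow_mul, one_div, inv_mul_cancel₀ (ne_of_gt hkpos), ENNReal.rpow_one] at h1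
    have h2 : (ENNReal.ofReal r) ^ (k : ℝ) = ENNReal.ofReal (r ^ (k : ℝ)) :=
      ENNReal.ofReal_rpow_of_pos hrpos
    rw [h2, ENNReal.lt_ofReal_iff_toReal_lt ENNReal.coe_ne_top] at h1
    simp only [ENNReal.coe_toReal, coe_nnnorm] at h1
    rw [← Real.rpow_natCast r k]
    exact le_of_lt h1
  -- the seminorm
  have hmain : ∀ (i : ℕ) (v : EuclideanSpace ℝ (Fin n)),
      ‖(WithLp.equiv 2 (Fin n → ℝ)).symm ((A ^ i).mulVec (WithLp.equiv 2 (Fin n → ℝ) v))‖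
        ≤ ‖T ^ i‖ * ‖v‖ := by
    intro i v
    have h := key_bound (A ^ i) v
    have : ((A ^ i).map Complex.ofRealHom) = Aℂ ^ i := by
      rw [hAℂdef]
      exact (map_pow (Complex.ofRealHom.mapMatrix) A i)
    rw [this, map_pow] at h
    exact h
  -- the adapted seminorm
  have hAk : ∀ v : EuclideanSpace ℝ (Fin n),
      ‖(WithLp.equiv 2 (Fin n → ℝ)).symm ((A ^ k).mulVec (WithLp.equiv 2 (Fin n → ℝ) v))‖
        ≤ r ^ k * ‖v‖ := fun v =>
    (hmain k v).trans (mul_le_mul_of_nonneg_right hTk (norm_nonneg v))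
  set e : EuclideanSpace ℝ (Fin n) → ℕ → ℝ := fun v i =>
    ‖(WithLp.equiv 2 (Fin n → ℝ)).symm ((A ^ i).mulVec (WithLp.equiv 2 (Fin n → ℝ) v))‖
    with he
  have he_nonneg : ∀ v i, 0 ≤ e v i := fun v i => norm_nonneg _
  set N : Seminorm ℝ (EuclideanSpace ℝ (Fin n)) := Seminorm.of
    (fun v => ∑ i ∈ Finset.range k, r⁻¹ ^ i * e v i)
    (fun x y => by
      rw [← Finset.sum_add_distrib]
      refine Finset.sum_le_sum fun i _ => ?_
      rw [← mul_add]
      refine mul_le_mul_of_nonneg_left ?_ (by positivity)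
      simp only [he]
      rw [show (WithLp.equiv 2 (Fin n → ℝ)) (x + y)
            = (WithLp.equiv 2 (Fin n → ℝ)) x + (WithLp.equiv 2 (Fin n → ℝ)) y from rfl,
        Matrix.mulVec_add,
        show ∀ a b : Fin n → ℝ, (WithLp.equiv 2 (Fin n → ℝ)).symm (a + b)
            = (WithLp.equiv 2 (Fin n → ℝ)).symm a + (WithLp.equiv 2 (Fin n → ℝ)).symm b
          from fun a b => rfl]
      exact norm_add_le _ _)
    (fun a x => by
      rw [Finset.mul_sum]
      refine Finset.sum_congr rfl fun i _ => ?_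
      have : e (a • x) i = ‖a‖ * e x i := by
        simp only [he]
        rw [show (WithLp.equiv 2 (Fin n → ℝ)) (a • x)
              = a • (WithLp.equiv 2 (Fin n → ℝ)) x from rfl,
          Matrix.mulVec_smul,
          show ∀ b : Fin n → ℝ, (WithLp.equiv 2 (Fin n → ℝ)).symm (a • b)
              = a • (WithLp.equiv 2 (Fin n → ℝ)).symm b from fun b => rfl,
          norm_smul, Real.norm_eq_abs]
      rw [this]
      ring) with hN
  have hNapp : ∀ v, N v = ∑ i ∈ Finset.range k, r⁻¹ ^ i * e v i := fun v => rfl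
  have he0 : ∀ v, e v 0 = ‖v‖ := by
    intro v
    simp only [he, pow_zero, Matrix.one_mulVec]
    rw [Equiv.symm_apply_apply]
  have hterm_nonneg : ∀ v i, 0 ≤ r⁻¹ ^ i * e v i := fun v i => by positivity
  have hnorm_le : ∀ v, ‖v‖ ≤ N v := by
    intro v
    rw [hNapp]
    have h0 : (0 : ℕ) ∈ Finset.range k := Finset.mem_range.mpr hk1
    have := Finset.single_le_sum (f := fun i => r⁻¹ ^ i * e v i)
      (fun i _ => hterm_nonneg v i) h0
    simpa [he0 v] using this
  set C : ℝ := ∑ i ∈ Finset.range k, r⁻¹ ^ i * (‖T ^ i‖ + 1) with hC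
  have hC1 : 1 ≤ C := by
    have h0 : (0 : ℕ) ∈ Finset.range k := Finset.mem_range.mpr hk1
    have := Finset.single_le_sum (f := fun i => r⁻¹ ^ i * (‖T ^ i‖ + 1))
      (fun i _ => by positivity) h0
    simp only [pow_zero, one_mul] at this
    linarith [norm_nonneg (1 : EuclideanSpace ℂ (Fin n) →L[ℂ] EuclideanSpace ℂ (Fin n))]
  have hC0 : (0 : ℝ) < C := lt_of_lt_of_le one_pos hC1
  refine ⟨N, ⟨C, hC0, fun v => ⟨?_, ?_⟩⟩, ?_⟩
  · calc C⁻¹ * ‖v‖ ≤ 1 * ‖v‖ := by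
          refine mul_le_mul_of_nonneg_right ?_ (norm_nonneg v)
          exact inv_le_one_of_one_le₀ hC1
      _ = ‖v‖ := one_mul _
      _ ≤ N v := hnorm_le v
  · rw [hNapp, hC, Finset.sum_mul]
    refine Finset.sum_le_sum fun i _ => ?_
    rw [mul_assoc]
    refine mul_le_mul_of_nonneg_left ?_ (by positivity)
    calc e v i ≤ ‖T ^ i‖ * ‖v‖ := hmain i v
      _ ≤ (‖T ^ i‖ + 1) * ‖v‖ := by nlinarith [norm_nonneg v]
  · intro v hv
    have hew : ∀ i, e (WithLp.toLp 2 (A.mulVec (v : Fin n → ℝ))) i = e v (i + 1) := by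
      intro i
      simp only [he]
      congr 1
      rw [show (WithLp.equiv 2 (Fin n → ℝ)) (WithLp.toLp 2 (A.mulVec (v : Fin n → ℝ) : Fin n → ℝ) :
            EuclideanSpace ℝ (Fin n)) = A.mulVec (WithLp.equiv 2 (Fin n → ℝ) v) from rfl,
        Matrix.mulVec_mulVec, ← pow_succ]
    have hgk : r⁻¹ ^ k * e v k ≤ ‖v‖ := by
      calc r⁻¹ ^ k * e v k ≤ r⁻¹ ^ k * (r ^ k * ‖v‖) :=
            mul_le_mul_of_nonneg_left (hAk v) (by positivity)
        _ = ‖v‖ := by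
            rw [← mul_assoc, ← mul_pow, inv_mul_cancel₀ (ne_of_gt hrpos), one_pow, one_mul]
    have hsum : ∑ i ∈ Finset.range k, r⁻¹ ^ (i + 1) * e v (i + 1) ≤ N v := by
      have h1 : ∑ i ∈ Finset.range (k + 1), r⁻¹ ^ i * e v i
          = (∑ i ∈ Finset.range k, r⁻¹ ^ (i + 1) * e v (i + 1)) + r⁻¹ ^ 0 * e v 0 :=
        Finset.sum_range_succ' _ k
      have h2 : ∑ i ∈ Finset.range (k + 1), r⁻¹ ^ i * e v i
          = N v + r⁻¹ ^ k * e v k := by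
        rw [Finset.sum_range_succ, hNapp]
      have h3 : r⁻¹ ^ 0 * e v 0 = ‖v‖ := by rw [pow_zero, one_mul, he0]
      have : (∑ i ∈ Finset.range k, r⁻¹ ^ (i + 1) * e v (i + 1)) + ‖v‖
          = N v + r⁻¹ ^ k * e v k := by rw [← h3, ← h1, h2]
      linarith [hgk]
    calc N (WithLp.toLp 2 (A.mulVec (v : Fin n → ℝ)))
        = ∑ i ∈ Finset.range k, r⁻¹ ^ i * e v (i + 1) := by
          rw [hNapp]
          exact Finset.sum_congr rfl fun i _ => by rw [hew i]
      _ = r * ∑ i ∈ Finset.range k, r⁻¹ ^ (i + 1) * e v (i + 1) := by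
          rw [Finset.mul_sum]
          refine Finset.sum_congr rfl fun i _ => ?_
          rw [pow_succ, ← mul_assoc, ← mul_assoc, mul_comm r (r⁻¹ ^ i), mul_assoc (r⁻¹ ^ i),
            mul_inv_cancel₀ (ne_of_gt hrpos), mul_one]
      _ ≤ r * N v := mul_le_mul_of_nonneg_left hsum hrpos.le
      _ = r := by rw [hv, mul_one]
      _ < ρ + δ := by rw [hr]; linarith
end

section
/- Let λ₁, λ₂ be positive reals, not equal to 1, with λ₁ ≠ λ₂, and z₁, z₂, w₁, w₂, a₁, a₂ real numbers with z₁ ≠ 0, w₁ ≠ 0, z₂ ≠ 0, w₂ ≠ 0, a₁ ≠ 0, a₂ ≠ 0. Then the set of pairs (t, t') ∈ ℝ² satisfying λ₁ᵗ z₁ = λ₁^{t'} w₁ + a₁ and λ₂ᵗ z₂ = λ₂^{t'} w₂ + a₂ has at most two elements. -/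
private lemma rpow_right_inj {x y b : ℝ} (hx : 0 < x) (hy : 0 < y) (hb : b ≠ 0)
    (h : x ^ b = y ^ b) : x = y := by
  have hx' := Real.log_rpow hx b
  have hy' := Real.log_rpow hy b
  have h2 : b * Real.log x = b * Real.log y := by rw [← hx', ← hy', h]
  have hlog : Real.log x = Real.log y := mul_left_cancel₀ hb h2
  calc x = Real.exp (Real.log x) := (Real.exp_log hx).symm
    _ = Real.exp (Real.log y) := by rw [hlog]
    _ = y := Real.exp_log hy

private lemma hasDeriv_aux (z₁ z₂ w₁ w₂ a₂ a₁ α : ℝ) {u : ℝ}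
    (hu : u ≠ 0) (hY : (z₁ * u - a₁) / w₁ ≠ 0) :
    HasDerivAt (fun u => z₂ * u ^ α - (w₂ * ((z₁ * u - a₁) / w₁) ^ α + a₂))
      (z₂ * (α * u ^ (α - 1)) -
        w₂ * (α * ((z₁ * u - a₁) / w₁) ^ (α - 1) * (z₁ / w₁))) u := by
  have h1 : HasDerivAt (fun u : ℝ => u ^ α) (α * u ^ (α - 1)) u :=
    Real.hasDerivAt_rpow_const (Or.inl hu)
  have hlin : HasDerivAt (fun u : ℝ => (z₁ * u - a₁) / w₁) (z₁ / w₁) u := by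
    have h0 : HasDerivAt (fun u : ℝ => z₁ * u - a₁) z₁ u := by
      simpa using ((hasDerivAt_id u).const_mul z₁).sub_const a₁
    simpa [div_eq_mul_inv] using h0.div_const w₁
  have h2 : HasDerivAt (fun u : ℝ => ((z₁ * u - a₁) / w₁) ^ α)
      (α * ((z₁ * u - a₁) / w₁) ^ (α - 1) * (z₁ / w₁)) u := by
    have := (Real.hasDerivAt_rpow_const (p := α) (Or.inl hY)).comp u hlin
    exact this
  exact (h1.const_mul z₂).sub ((h2.const_mul w₂).add_const a₂)

private lemma no_three_zeros (z₁ z₂ w₁ w₂ a₁ a₂ α : ℝ)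
    (hz₂ : z₂ ≠ 0) (hw₁ : w₁ ≠ 0) (ha₁ : a₁ ≠ 0) (hα0 : α ≠ 0) (hα1 : α ≠ 1)
    {u₁ u₂ u₃ : ℝ}
    (hp₁ : 0 < u₁) (hY₁ : 0 < (z₁ * u₁ - a₁) / w₁)
    (hp₃ : 0 < u₃) (hY₃ : 0 < (z₁ * u₃ - a₁) / w₁)
    (hf₁ : z₂ * u₁ ^ α - (w₂ * ((z₁ * u₁ - a₁) / w₁) ^ α + a₂) = 0)
    (hf₂ : z₂ * u₂ ^ α - (w₂ * ((z₁ * u₂ - a₁) / w₁) ^ α + a₂) = 0)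
    (hf₃ : z₂ * u₃ ^ α - (w₂ * ((z₁ * u₃ - a₁) / w₁) ^ α + a₂) = 0)
    (h12 : u₁ < u₂) (h23 : u₂ < u₃) : False := by
  set f : ℝ → ℝ := fun u => z₂ * u ^ α - (w₂ * ((z₁ * u - a₁) / w₁) ^ α + a₂) with hf
  set f' : ℝ → ℝ := fun u => z₂ * (α * u ^ (α - 1)) -
    w₂ * (α * ((z₁ * u - a₁) / w₁) ^ (α - 1) * (z₁ / w₁)) with hf'
  -- the domain is convex
  have hD : ∀ x : ℝ, u₁ ≤ x → x ≤ u₃ → 0 < x ∧ 0 < (z₁ * x - a₁) / w₁ := by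
    intro x hx1 hx3
    refine ⟨lt_of_lt_of_le hp₁ hx1, ?_⟩
    rcases le_or_gt 0 (z₁ / w₁) with h | h
    · have key : (z₁ * x - a₁) / w₁ = (z₁ * u₁ - a₁) / w₁ + (x - u₁) * (z₁ / w₁) := by
        field_simp; ring
      rw [key]
      have : 0 ≤ (x - u₁) * (z₁ / w₁) := mul_nonneg (by linarith) h
      linarith
    · have key : (z₁ * x - a₁) / w₁ = (z₁ * u₃ - a₁) / w₁ + (x - u₃) * (z₁ / w₁) := by
        field_simp; ring
      rw [key]
      have : 0 ≤ (x - u₃) * (z₁ / w₁) := by nlinarith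
      linarith
  have hderiv : ∀ x : ℝ, u₁ ≤ x → x ≤ u₃ → HasDerivAt f (f' x) x := by
    intro x hx1 hx3
    obtain ⟨hx, hY⟩ := hD x hx1 hx3
    exact hasDeriv_aux z₁ z₂ w₁ w₂ a₂ a₁ α (ne_of_gt hx) (ne_of_gt hY)
  -- Rolle on [u₁, u₂]
  have hc₁ : ∃ c ∈ Set.Ioo u₁ u₂, f' c = 0 := by
    apply exists_hasDerivAt_eq_zero h12
    · intro x hx
      exact (hderiv x hx.1 (le_trans hx.2 h23.le)).continuousAt.continuousWithinAt
    · exact hf₁.trans hf₂.symm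
    · intro x hx
      exact hderiv x hx.1.le (le_trans hx.2.le h23.le)
  have hc₂ : ∃ c ∈ Set.Ioo u₂ u₃, f' c = 0 := by
    apply exists_hasDerivAt_eq_zero h23
    · intro x hx
      exact (hderiv x (le_trans h12.le hx.1) hx.2).continuousAt.continuousWithinAt
    · exact hf₂.trans hf₃.symm
    · intro x hx
      exact hderiv x (le_trans h12.le hx.1.le) hx.2.le
  obtain ⟨c₁, hc₁m, hc₁0⟩ := hc₁
  obtain ⟨c₂, hc₂m, hc₂0⟩ := hc₂
  have hcc : c₁ < c₂ := lt_trans hc₁m.2 hc₂m.1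
  obtain ⟨hcp₁, hcY₁⟩ := hD c₁ hc₁m.1.le (le_trans hc₁m.2.le h23.le)
  obtain ⟨hcp₂, hcY₂⟩ := hD c₂ (le_trans h12.le hc₂m.1.le) hc₂m.2.le
  set β := α - 1 with hβ
  have hβ0 : β ≠ 0 := sub_ne_zero.mpr hα1
  set Y₁ := (z₁ * c₁ - a₁) / w₁ with hY₁d
  set Y₂ := (z₁ * c₂ - a₁) / w₁ with hY₂d
  have e₁ : z₂ * c₁ ^ β = w₂ * Y₁ ^ β * (z₁ / w₁) := by
    apply mul_left_cancel₀ hα0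
    have := hc₁0
    simp only [hf'] at this
    linear_combination this
  have e₂ : z₂ * c₂ ^ β = w₂ * Y₂ ^ β * (z₁ / w₁) := by
    apply mul_left_cancel₀ hα0
    have := hc₂0
    simp only [hf'] at this
    linear_combination this
  have key : c₁ ^ β * Y₂ ^ β = c₂ ^ β * Y₁ ^ β := by
    apply mul_left_cancel₀ hz₂
    linear_combination Y₂ ^ β * e₁ - Y₁ ^ β * e₂
  have key2 : (c₁ * Y₂) ^ β = (c₂ * Y₁) ^ β := by
    rw [Real.mul_rpow hcp₁.le hcY₂.le, Real.mul_rpow hcp₂.le hcY₁.le]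
    exact key
  have key3 : c₁ * Y₂ = c₂ * Y₁ :=
    rpow_right_inj (mul_pos hcp₁ hcY₂) (mul_pos hcp₂ hcY₁) hβ0 key2
  rw [hY₁d, hY₂d] at key3
  have : a₁ * (c₂ - c₁) = 0 := by
    field_simp at key3
    linear_combination key3
  rcases mul_eq_zero.mp this with h | h
  · exact ha₁ h
  · linarith

/-- The generic case in the orbit-intersection lemma: for distinct positive bases
`λ₁ ≠ λ₂`, both different from 1, and nonzero constants, the system
`λ₁ᵗ z₁ = λ₁^t' w₁ + a₁`, `λ₂ᵗ z₂ = λ₂^t' w₂ + a₂` has at most two solutions `(t, t')`. -/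
theorem system_has_at_most_two_solutions (l₁ l₂ z₁ z₂ w₁ w₂ a₁ a₂ : ℝ)
    (hl₁ : 0 < l₁) (hl₂ : 0 < l₂) (hl₁1 : l₁ ≠ 1) (hl₂1 : l₂ ≠ 1) (hll : l₁ ≠ l₂)
    (hz₁ : z₁ ≠ 0) (hz₂ : z₂ ≠ 0) (hw₁ : w₁ ≠ 0) (hw₂ : w₂ ≠ 0)
    (ha₁ : a₁ ≠ 0) (ha₂ : a₂ ≠ 0) :
    ∃ p q : ℝ × ℝ,
      {s : ℝ × ℝ | l₁ ^ s.1 * z₁ = l₁ ^ s.2 * w₁ + a₁ ∧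
        l₂ ^ s.1 * z₂ = l₂ ^ s.2 * w₂ + a₂} ⊆ {p, q} := by
  classical
  set S : Set (ℝ × ℝ) := {s : ℝ × ℝ | l₁ ^ s.1 * z₁ = l₁ ^ s.2 * w₁ + a₁ ∧
        l₂ ^ s.1 * z₂ = l₂ ^ s.2 * w₂ + a₂} with hS
  have hlog₁ : Real.log l₁ ≠ 0 := by
    intro h
    rcases Real.log_eq_zero.mp h with h | h | h
    · exact absurd h (ne_of_gt hl₁)
    · exact hl₁1 h
    · linarith
  have hlog₂ : Real.log l₂ ≠ 0 := by
    intro h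
    rcases Real.log_eq_zero.mp h with h | h | h
    · exact absurd h (ne_of_gt hl₂)
    · exact hl₂1 h
    · linarith
  set α : ℝ := Real.log l₂ / Real.log l₁ with hαdef
  have hα0 : α ≠ 0 := div_ne_zero hlog₂ hlog₁
  have hαl : α * Real.log l₁ = Real.log l₂ := div_mul_cancel₀ _ hlog₁
  have hα1 : α ≠ 1 := by
    intro h
    rw [h, one_mul] at hαl
    exact hll (Real.log_injOn_pos (Set.mem_Ioi.mpr hl₁) (Set.mem_Ioi.mpr hl₂) hαl)
  -- conversion: l₂ ^ t = (l₁ ^ t) ^ α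
  have hconv : ∀ t : ℝ, l₂ ^ t = (l₁ ^ t) ^ α := by
    intro t
    rw [← Real.rpow_mul hl₁.le]
    rw [Real.rpow_def_of_pos hl₁, Real.rpow_def_of_pos hl₂]
    congr 1
    rw [← hαl]; ring
  -- injectivity of t ↦ l₁ ^ t
  have hinj : ∀ t s : ℝ, l₁ ^ t = l₁ ^ s → t = s := by
    intro t s h
    have h1 := Real.log_rpow hl₁ t
    have h2 := Real.log_rpow hl₁ s
    have : t * Real.log l₁ = s * Real.log l₁ := by rw [← h1, ← h2, h]
    exact mul_right_cancel₀ hlog₁ this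
  -- facts about a solution
  have hYfact : ∀ s ∈ S, l₁ ^ s.2 = (z₁ * l₁ ^ s.1 - a₁) / w₁ := by
    intro s hs
    rw [eq_div_iff hw₁]
    linear_combination -hs.1
  have hufact : ∀ s ∈ S,
      0 < l₁ ^ s.1 ∧ 0 < (z₁ * l₁ ^ s.1 - a₁) / w₁ ∧
      z₂ * (l₁ ^ s.1) ^ α - (w₂ * ((z₁ * l₁ ^ s.1 - a₁) / w₁) ^ α + a₂) = 0 := by
    intro s hs
    have hY := hYfact s hs
    refine ⟨Real.rpow_pos_of_pos hl₁ _, ?_, ?_⟩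
    · rw [← hY]; exact Real.rpow_pos_of_pos hl₁ _
    · have h2 := hs.2
      rw [hconv s.1, hconv s.2, hY] at h2
      linear_combination h2
  -- u determines the solution
  have hudet : ∀ s ∈ S, ∀ s' ∈ S, l₁ ^ s.1 = l₁ ^ s'.1 → s = s' := by
    intro s hs s' hs' h
    have h1 : s.1 = s'.1 := hinj _ _ h
    have h2 : l₁ ^ s.2 = l₁ ^ s'.2 := by
      rw [hYfact s hs, hYfact s' hs', h]
    exact Prod.ext h1 (hinj _ _ h2)
  -- no three solutions with pairwise distinct u-values
  have hthree : ∀ s₁ ∈ S, ∀ s₂ ∈ S, ∀ s₃ ∈ S,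
      l₁ ^ s₁.1 < l₁ ^ s₂.1 → l₁ ^ s₂.1 < l₁ ^ s₃.1 → False := by
    intro s₁ hs₁ s₂ hs₂ s₃ hs₃ h12 h23
    obtain ⟨hu₁, hY₁, hf₁⟩ := hufact s₁ hs₁
    obtain ⟨hu₂, hY₂, hf₂⟩ := hufact s₂ hs₂
    obtain ⟨hu₃, hY₃, hf₃⟩ := hufact s₃ hs₃
    exact no_three_zeros z₁ z₂ w₁ w₂ a₁ a₂ α hz₂ hw₁ ha₁ hα0 hα1
      hu₁ hY₁ hu₃ hY₃ hf₁ hf₂ hf₃ h12 h23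
  -- any three solutions: two coincide
  have htwo : ∀ s₁ ∈ S, ∀ s₂ ∈ S, ∀ s₃ ∈ S, s₁ = s₂ ∨ s₁ = s₃ ∨ s₂ = s₃ := by
    intro s₁ hs₁ s₂ hs₂ s₃ hs₃
    by_contra h
    push_neg at h
    obtain ⟨h12, h13, h23⟩ := h
    have d12 : l₁ ^ s₁.1 ≠ l₁ ^ s₂.1 := fun h => h12 (hudet _ hs₁ _ hs₂ h)
    have d13 : l₁ ^ s₁.1 ≠ l₁ ^ s₃.1 := fun h => h13 (hudet _ hs₁ _ hs₃ h)
    have d23 : l₁ ^ s₂.1 ≠ l₁ ^ s₃.1 := fun h => h23 (hudet _ hs₂ _ hs₃ h)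
    rcases lt_trichotomy (l₁ ^ s₁.1) (l₁ ^ s₂.1) with a | a | a
    · rcases lt_trichotomy (l₁ ^ s₂.1) (l₁ ^ s₃.1) with b | b | b
      · exact hthree s₁ hs₁ s₂ hs₂ s₃ hs₃ a b
      · exact d23 b
      · rcases lt_trichotomy (l₁ ^ s₁.1) (l₁ ^ s₃.1) with c | c | c
        · exact hthree s₁ hs₁ s₃ hs₃ s₂ hs₂ c b
        · exact d13 c
        · exact hthree s₃ hs₃ s₁ hs₁ s₂ hs₂ c a
    · exact d12 a
    · rcases lt_trichotomy (l₁ ^ s₁.1) (l₁ ^ s₃.1) with b | b | b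
      · exact hthree s₂ hs₂ s₁ hs₁ s₃ hs₃ a b
      · exact d13 b
      · rcases lt_trichotomy (l₁ ^ s₂.1) (l₁ ^ s₃.1) with c | c | c
        · exact hthree s₂ hs₂ s₃ hs₃ s₁ hs₁ c b
        · exact d23 c
        · exact hthree s₃ hs₃ s₂ hs₂ s₁ hs₁ c a
  -- assemble
  by_cases hne : S.Nonempty
  · obtain ⟨p, hp⟩ := hne
    by_cases hq : ∃ q ∈ S, q ≠ p
    · obtain ⟨q, hqS, hqp⟩ := hq
      refine ⟨p, q, ?_⟩
      intro s hs
      rcases htwo s hs p hp q hqS with h | h | h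
      · exact Or.inl h
      · exact Or.inr h
      · exact absurd h.symm hqp
    · push_neg at hq
      exact ⟨p, p, fun s hs => Or.inl (hq s hs)⟩
  · exact ⟨(0, 0), (0, 0), fun s hs => absurd ⟨s, hs⟩ hne⟩
end

section
/- Let φ ∈ GL_n(ℤ) be a hyperbolic automorphism of ℤⁿ, diagonalizable over ℝ with all eigenvalues positive. Then for every D > 0 there exists N > 0 such that for any collection of m > N distinct points a₁, …, a_m ∈ ℤⁿ, there exist indices i ≠ j with ‖φᵏ(aᵢ) − φᵏ(aⱼ)‖ > D for all k ∈ ℤ. -/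
namespace PairFar
open Matrix Finset

variable {n : ℕ}

noncomputable def glmap (M : Matrix.GeneralLinearGroup (Fin n) ℤ) :
    Matrix.GeneralLinearGroup (Fin n) ℝ :=
  Units.map (RingHom.mapMatrix (Int.castRingHom ℝ)).toMonoidHom M

def rv (x : Fin n → ℤ) : Fin n → ℝ := fun i => (x i : ℝ)

noncomputable def phi (M : Matrix.GeneralLinearGroup (Fin n) ℤ) (k : ℤ) (z : Fin n → ℝ) :
    Fin n → ℝ :=
  ((glmap M ^ k : Matrix.GeneralLinearGroup (Fin n) ℝ) : Matrix (Fin n) (Fin n) ℝ).mulVec z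

lemma phi_rv (M : Matrix.GeneralLinearGroup (Fin n) ℤ) (k : ℤ) (x : Fin n → ℤ) :
    phi M k (rv x) = rv (((M ^ k : Matrix.GeneralLinearGroup (Fin n) ℤ) :
      Matrix (Fin n) (Fin n) ℤ).mulVec x) := by
  unfold phi rv glmap
  rw [← map_zpow]
  ext i
  exact (RingHom.map_mulVec (Int.castRingHom ℝ) _ x i).symm

lemma phi_add (M : Matrix.GeneralLinearGroup (Fin n) ℤ) (s t : ℤ) (z : Fin n → ℝ) :
    phi M (s + t) z = phi M s (phi M t z) := by
  unfold phi
  rw [Matrix.mulVec_mulVec, ← Matrix.GeneralLinearGroup.coe_mul, ← _root_.zpow_add]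

lemma phi_zero (M : Matrix.GeneralLinearGroup (Fin n) ℤ) (z : Fin n → ℝ) :
    phi M 0 z = z := by
  unfold phi
  simp

lemma phi_addv (M : Matrix.GeneralLinearGroup (Fin n) ℤ) (k : ℤ) (z w : Fin n → ℝ) :
    phi M k (z + w) = phi M k z + phi M k w := Matrix.mulVec_add _ _ _

lemma phi_subv (M : Matrix.GeneralLinearGroup (Fin n) ℤ) (k : ℤ) (z w : Fin n → ℝ) :
    phi M k (z - w) = phi M k z - phi M k w := Matrix.mulVec_sub _ _ _

lemma phi_smul (M : Matrix.GeneralLinearGroup (Fin n) ℤ) (k : ℤ) (c : ℝ) (z : Fin n → ℝ) :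
    phi M k (c • z) = c • phi M k z := by
  unfold phi
  rw [Matrix.mulVec_smul]

lemma phi_inj (M : Matrix.GeneralLinearGroup (Fin n) ℤ) (k : ℤ) {z w : Fin n → ℝ}
    (h : phi M k z = phi M k w) : z = w := by
  have := congrArg (phi M (-k)) h
  rwa [← phi_add, ← phi_add, neg_add_cancel, phi_zero, phi_zero] at this

end PairFar

namespace PairFar2
open Matrix Finset PairFar

variable {n : ℕ} {M : Matrix.GeneralLinearGroup (Fin n) ℤ} {v : Fin n → Fin n → ℝ} {μ : Fin n → ℝ}

lemma phi_one_eigen (hμ : ∀ i, 0 < μ i)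
    (heig : ∀ i, ((M : Matrix (Fin n) (Fin n) ℤ).map (fun x : ℤ => (x : ℝ))).mulVec (v i)
      = μ i • v i) (i : Fin n) : phi M 1 (v i) = μ i • v i := by
  unfold phi glmap
  rw [zpow_one]
  exact heig i

lemma phi_neg_one_eigen (hμ : ∀ i, 0 < μ i)
    (heig : ∀ i, ((M : Matrix (Fin n) (Fin n) ℤ).map (fun x : ℤ => (x : ℝ))).mulVec (v i)
      = μ i • v i) (i : Fin n) : phi M (-1) (v i) = (μ i)⁻¹ • v i := by
  apply phi_inj M 1
  rw [← phi_add, add_neg_cancel, phi_zero, phi_smul, phi_one_eigen hμ heig i,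
    smul_smul, inv_mul_cancel₀ (hμ i).ne', one_smul]

lemma phi_eigen (hμ : ∀ i, 0 < μ i)
    (heig : ∀ i, ((M : Matrix (Fin n) (Fin n) ℤ).map (fun x : ℤ => (x : ℝ))).mulVec (v i)
      = μ i • v i) (i : Fin n) : ∀ k : ℤ, phi M k (v i) = (μ i ^ k) • v i := by
  intro k
  induction k using Int.induction_on with
  | zero => rw [phi_zero, zpow_zero, one_smul]
  | succ k ih =>
      have : ((k : ℤ) + 1) = 1 + (k : ℤ) := by ring
      rw [this, phi_add, ih, phi_smul, phi_one_eigen hμ heig i, smul_smul]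
      rw [mul_comm, ← zpow_one_add₀ (hμ i).ne']
  | pred k ih =>
      have : (-(k : ℤ) - 1) = -1 + (-(k : ℤ)) := by ring
      rw [this, phi_add, ih, phi_smul, phi_neg_one_eigen hμ heig i, smul_smul,
        mul_comm, ← _root_.zpow_neg_one, ← zpow_add₀ (hμ i).ne']

end PairFar2

namespace PairFar3
open Matrix Finset PairFar

variable {n : ℕ}

lemma unif {α : Type*} (T : Finset α) (P : α → ℝ → Prop)
    (hmono : ∀ a (ε ε' : ℝ), ε' ≤ ε → P a ε → P a ε')
    (h : ∀ a ∈ T, ∃ ε, 0 < ε ∧ P a ε) : ∃ ε, 0 < ε ∧ ∀ a ∈ T, P a ε := by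
  classical
  induction T using Finset.induction_on with
  | empty => exact ⟨1, one_pos, by simp⟩
  | insert a s hx ih =>
      obtain ⟨ε₁, hε₁, hP₁⟩ := h a (mem_insert_self a s)
      obtain ⟨ε₂, hε₂, hP₂⟩ := ih (fun b hb => h b (mem_insert_of_mem hb))
      refine ⟨min ε₁ ε₂, lt_min hε₁ hε₂, ?_⟩
      intro b hb
      rcases mem_insert.mp hb with rfl | hb
      · exact hmono b ε₁ _ (min_le_left _ _) hP₁
      · exact hmono b ε₂ _ (min_le_right _ _) (hP₂ b hb)

lemma powH1 {l x : ℝ} (hl : 1 < l) (hx : l ≤ x) {K : ℕ} {k : ℤ} (hk : (K : ℤ) ≤ k) :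
    l ^ K ≤ x ^ k := by
  have hk0 : 0 ≤ k := le_trans (by positivity) hk
  lift k to ℕ using hk0 with m
  rw [zpow_natCast]
  calc l ^ K ≤ l ^ m := pow_le_pow_right₀ hl.le (by exact_mod_cast hk)
    _ ≤ x ^ m := pow_le_pow_left₀ (by linarith) hx m

lemma powH2 {l x : ℝ} (hl : 1 < l) (hx0 : 0 < x) (hx : x ≤ l⁻¹) {K : ℕ} {k : ℤ}
    (hk : (K : ℤ) ≤ k) : x ^ k ≤ (l ^ K)⁻¹ := by
  have hl0 : 0 < l := lt_trans one_pos hl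
  have h1 : l ≤ x⁻¹ := by
    rw [le_inv_comm₀ hl0 hx0] at *
    exact hx
  have h2 := powH1 hl h1 hk
  rw [_root_.inv_zpow] at h2
  have hxk : 0 < x ^ k := zpow_pos hx0 k
  have := inv_anti₀ (by positivity) h2
  rwa [inv_inv] at this

lemma powH3 {l x : ℝ} (hl : 1 < l) (hx : l ≤ x) {K : ℕ} {k : ℤ} (hk : k ≤ -(K : ℤ)) :
    x ^ k ≤ (l ^ K)⁻¹ := by
  have hx0 : 0 < x := lt_of_lt_of_le (lt_trans one_pos hl) hx
  have h2 : l ^ K ≤ x ^ (-k) := powH1 hl hx (by omega)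
  have h3 := inv_anti₀ (by positivity) h2
  rwa [_root_.zpow_neg, inv_inv] at h3

lemma powH4 {l x : ℝ} (hl : 1 < l) (hx0 : 0 < x) (hx : x ≤ l⁻¹) {K : ℕ} {k : ℤ}
    (hk : k ≤ -(K : ℤ)) : l ^ K ≤ x ^ k := by
  have hl0 : 0 < l := lt_trans one_pos hl
  have h1 : l ≤ x⁻¹ := by
    rw [le_inv_comm₀ hl0 hx0] at *
    exact hx
  have h2 : l ^ K ≤ (x⁻¹) ^ (-k) := powH1 hl h1 (by omega)
  rwa [_root_.inv_zpow, ← _root_.zpow_neg, neg_neg] at h2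

lemma exists_gamma (B : Module.Basis (Fin n) ℝ (Fin n → ℝ)) :
    ∃ γ : ℝ, 0 < γ ∧ (∀ z i, |B.equivFun z i| ≤ γ * ‖z‖) ∧
      (∀ t : Fin n → ℝ, ‖(B.equivFun.symm t : Fin n → ℝ)‖ ≤ γ * ‖t‖) := by
  let f1 : (Fin n → ℝ) →L[ℝ] (Fin n → ℝ) :=
    LinearMap.toContinuousLinearMap (B.equivFun : (Fin n → ℝ) →ₗ[ℝ] (Fin n → ℝ))
  let f2 : (Fin n → ℝ) →L[ℝ] (Fin n → ℝ) :=
    LinearMap.toContinuousLinearMap (B.equivFun.symm : (Fin n → ℝ) →ₗ[ℝ] (Fin n → ℝ))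
  refine ⟨max ‖f1‖ ‖f2‖ + 1, by positivity, ?_, ?_⟩
  · intro z i
    have h1 : |B.equivFun z i| ≤ ‖(B.equivFun z : Fin n → ℝ)‖ := by
      simpa using norm_le_pi_norm (B.equivFun z : Fin n → ℝ) i
    have h2 : ‖(B.equivFun z : Fin n → ℝ)‖ = ‖f1 z‖ := by simp [f1]
    calc |B.equivFun z i| ≤ ‖f1 z‖ := by rw [← h2]; exact h1
      _ ≤ ‖f1‖ * ‖z‖ := f1.le_opNorm z
      _ ≤ (max ‖f1‖ ‖f2‖ + 1) * ‖z‖ := by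
          apply mul_le_mul_of_nonneg_right _ (norm_nonneg z)
          calc ‖f1‖ ≤ max ‖f1‖ ‖f2‖ := le_max_left _ _
            _ ≤ _ := by linarith
  · intro t
    have h2 : ‖(B.equivFun.symm t : Fin n → ℝ)‖ = ‖f2 t‖ := by simp [f2]
    calc ‖(B.equivFun.symm t : Fin n → ℝ)‖ = ‖f2 t‖ := h2
      _ ≤ ‖f2‖ * ‖t‖ := f2.le_opNorm t
      _ ≤ (max ‖f1‖ ‖f2‖ + 1) * ‖t‖ := by
          apply mul_le_mul_of_nonneg_right _ (norm_nonneg t)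
          calc ‖f2‖ ≤ max ‖f1‖ ‖f2‖ := le_max_right _ _
            _ ≤ _ := by linarith

lemma rep_phi {M : Matrix.GeneralLinearGroup (Fin n) ℤ} {v : Fin n → Fin n → ℝ} {μ : Fin n → ℝ}
    (hμ : ∀ i, 0 < μ i)
    (heig : ∀ i, ((M : Matrix (Fin n) (Fin n) ℤ).map (fun x : ℤ => (x : ℝ))).mulVec (v i)
      = μ i • v i)
    (B : Module.Basis (Fin n) ℝ (Fin n → ℝ)) (hB : ∀ i, B i = v i) (k : ℤ) (z : Fin n → ℝ) :
    phi M k z = B.equivFun.symm (fun j => μ j ^ k * B.equivFun z j) := by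
  let Lk : (Fin n → ℝ) →ₗ[ℝ] (Fin n → ℝ) :=
    Matrix.mulVecLin ((glmap M ^ k : Matrix.GeneralLinearGroup (Fin n) ℝ) :
      Matrix (Fin n) (Fin n) ℝ)
  have hLk : ∀ w, phi M k w = Lk w := fun _ => rfl
  conv_lhs => rw [← B.equivFun.symm_apply_apply z, B.equivFun_symm_apply]
  rw [hLk, map_sum, B.equivFun_symm_apply]
  refine Finset.sum_congr rfl fun j _ => ?_
  rw [_root_.map_smul, ← hLk, hB, PairFar2.phi_eigen hμ heig j k, smul_smul]
  rw [mul_comm]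

end PairFar3

open Matrix Finset PairFar PairFar2 PairFar3 in
/-- For a hyperbolic automorphism `φ ∈ GL_n(ℤ)`, diagonalizable over `ℝ` with all
eigenvalues positive: for every `D > 0` there is `N` such that any collection of
more than `N` distinct lattice points contains a pair whose images under every
iterate `φᵏ` (`k ∈ ℤ`) are at Euclidean distance greater than `D`. -/
theorem exists_pair_far_in_all_iterates {n : ℕ}
    (M : Matrix.GeneralLinearGroup (Fin n) ℤ)
    (hdiag : ∃ (v : Fin n → Fin n → ℝ) (μ : Fin n → ℝ),
      LinearIndependent ℝ v ∧ (∀ i, 0 < μ i ∧ μ i ≠ 1) ∧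
      ∀ i, ((M : Matrix (Fin n) (Fin n) ℤ).map (fun x : ℤ => (x : ℝ))).mulVec (v i)
        = μ i • v i) :
    ∀ D : ℝ, 0 < D → ∃ N : ℕ, ∀ S : Finset (Fin n → ℤ), N < S.card →
      ∃ x ∈ S, ∃ y ∈ S, x ≠ y ∧ ∀ k : ℤ,
        D < Real.sqrt (∑ i, ((((M ^ k : Matrix.GeneralLinearGroup (Fin n) ℤ) :
          Matrix (Fin n) (Fin n) ℤ).mulVec x i -
            ((M ^ k : Matrix.GeneralLinearGroup (Fin n) ℤ) :
          Matrix (Fin n) (Fin n) ℤ).mulVec y i : ℤ) : ℝ) ^ 2) := by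
  classical
  obtain ⟨v, μ, hLI, hμ', heig⟩ := hdiag
  have hμ : ∀ i, 0 < μ i := fun i => (hμ' i).1
  have hμ1 : ∀ i, μ i ≠ 1 := fun i => (hμ' i).2
  intro D hD
  -- the finite set of candidate small lattice vectors
  set W : Finset (Fin n → ℤ) :=
    (Fintype.piFinset (fun _ : Fin n => Finset.Icc (-⌈D⌉) ⌈D⌉)).filter
      (fun w => w ≠ 0 ∧ ∀ i, |(w i : ℝ)| ≤ D) with hWdef
  have hWmem : ∀ w : Fin n → ℤ, w ∈ W ↔ w ≠ 0 ∧ ∀ i, |(w i : ℝ)| ≤ D := by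
    intro w
    constructor
    · intro hw; exact (Finset.mem_filter.mp hw).2
    · intro hw
      refine Finset.mem_filter.mpr ⟨?_, hw⟩
      rw [Fintype.mem_piFinset]
      intro i
      rw [Finset.mem_Icc]
      have h1 : |(w i : ℝ)| ≤ (⌈D⌉ : ℝ) := le_trans (hw.2 i) (Int.le_ceil D)
      rw [← Int.cast_abs] at h1
      have h2 : |w i| ≤ ⌈D⌉ := by exact_mod_cast h1
      exact abs_le.mp h2
  have hWneg : ∀ w ∈ W, -w ∈ W := by
    intro w hw
    rw [hWmem] at hw ⊢
    refine ⟨neg_ne_zero.mpr hw.1, fun i => ?_⟩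
    have h := hw.2 i
    have h2 : ((-w) i : ℝ) = -((w i : ℝ)) := by simp
    rw [h2, abs_neg]
    exact h
  -- nonzero lattice vectors stay nonzero under all iterates
  have hmulnz : ∀ (k : ℤ) (z : Fin n → ℤ), z ≠ 0 →
      ((M ^ k : Matrix.GeneralLinearGroup (Fin n) ℤ) : Matrix (Fin n) (Fin n) ℤ).mulVec z ≠ 0 := by
    intro k z hz h0
    apply hz
    have h1 : ((M ^ (-k) : Matrix.GeneralLinearGroup (Fin n) ℤ) : Matrix (Fin n) (Fin n) ℤ).mulVec
        (((M ^ k : Matrix.GeneralLinearGroup (Fin n) ℤ) : Matrix (Fin n) (Fin n) ℤ).mulVec z) = z := by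
      rw [Matrix.mulVec_mulVec, ← Units.val_mul, ← _root_.zpow_add, neg_add_cancel, zpow_zero,
        Units.val_one, Matrix.one_mulVec]
    rw [h0, Matrix.mulVec_zero] at h1
    exact h1.symm
  -- key : a failing iterate gives an element of W
  have key : ∀ (x y : Fin n → ℤ), x ≠ y → ∀ k : ℤ,
      Real.sqrt (∑ i, ((((M ^ k : Matrix.GeneralLinearGroup (Fin n) ℤ) :
          Matrix (Fin n) (Fin n) ℤ).mulVec x i -
            ((M ^ k : Matrix.GeneralLinearGroup (Fin n) ℤ) :
          Matrix (Fin n) (Fin n) ℤ).mulVec y i : ℤ) : ℝ) ^ 2) ≤ D →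
      ((M ^ k : Matrix.GeneralLinearGroup (Fin n) ℤ) : Matrix (Fin n) (Fin n) ℤ).mulVec (x - y) ∈ W := by
    intro x y hxy k hsqrt
    have hxyz : x - y ≠ 0 := sub_ne_zero.mpr hxy
    have hsub : ∀ j, ((M ^ k : Matrix.GeneralLinearGroup (Fin n) ℤ) :
        Matrix (Fin n) (Fin n) ℤ).mulVec x j - ((M ^ k : Matrix.GeneralLinearGroup (Fin n) ℤ) :
        Matrix (Fin n) (Fin n) ℤ).mulVec y j = ((M ^ k : Matrix.GeneralLinearGroup (Fin n) ℤ) :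
        Matrix (Fin n) (Fin n) ℤ).mulVec (x - y) j := by
      intro j
      rw [Matrix.mulVec_sub]
      rfl
    rw [hWmem]
    refine ⟨hmulnz k _ hxyz, fun i => ?_⟩
    have h2 : ((((M ^ k : Matrix.GeneralLinearGroup (Fin n) ℤ) :
          Matrix (Fin n) (Fin n) ℤ).mulVec x i -
            ((M ^ k : Matrix.GeneralLinearGroup (Fin n) ℤ) :
          Matrix (Fin n) (Fin n) ℤ).mulVec y i : ℤ) : ℝ) ^ 2 ≤
        ∑ j, ((((M ^ k : Matrix.GeneralLinearGroup (Fin n) ℤ) :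
          Matrix (Fin n) (Fin n) ℤ).mulVec x j -
            ((M ^ k : Matrix.GeneralLinearGroup (Fin n) ℤ) :
          Matrix (Fin n) (Fin n) ℤ).mulVec y j : ℤ) : ℝ) ^ 2 :=
      Finset.single_le_sum (f := fun j => ((((M ^ k : Matrix.GeneralLinearGroup (Fin n) ℤ) :
          Matrix (Fin n) (Fin n) ℤ).mulVec x j -
            ((M ^ k : Matrix.GeneralLinearGroup (Fin n) ℤ) :
          Matrix (Fin n) (Fin n) ℤ).mulVec y j : ℤ) : ℝ) ^ 2)
        (fun j _ => sq_nonneg _) (Finset.mem_univ i)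
    rw [← hsub i]
    calc |((((M ^ k : Matrix.GeneralLinearGroup (Fin n) ℤ) :
          Matrix (Fin n) (Fin n) ℤ).mulVec x i -
            ((M ^ k : Matrix.GeneralLinearGroup (Fin n) ℤ) :
          Matrix (Fin n) (Fin n) ℤ).mulVec y i : ℤ) : ℝ)|
        = Real.sqrt (((((M ^ k : Matrix.GeneralLinearGroup (Fin n) ℤ) :
          Matrix (Fin n) (Fin n) ℤ).mulVec x i -
            ((M ^ k : Matrix.GeneralLinearGroup (Fin n) ℤ) :
          Matrix (Fin n) (Fin n) ℤ).mulVec y i : ℤ) : ℝ) ^ 2) := (Real.sqrt_sq_eq_abs _).symm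
      _ ≤ _ := le_trans (Real.sqrt_le_sqrt h2) hsqrt
  by_cases hWne : W.Nonempty
  swap
  · refine ⟨1, fun S hS => ?_⟩
    obtain ⟨x, hx, y, hy, hxy⟩ := Finset.one_lt_card.mp hS
    refine ⟨x, hx, y, hy, hxy, fun k => ?_⟩
    by_contra hcon
    have hmem := key x y hxy k (not_lt.mp hcon)
    rw [Finset.not_nonempty_iff_eq_empty] at hWne
    rw [hWne] at hmem
    exact absurd hmem (Finset.notMem_empty _)
  -- main case
  obtain ⟨w₀, hw₀⟩ := hWne
  have hne : Nonempty (Fin n) := by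
    by_contra h
    exact ((hWmem w₀).mp hw₀).1 (funext fun i => absurd ⟨i⟩ h)
  have hcard : Fintype.card (Fin n) = Module.finrank ℝ (Fin n → ℝ) := by
    simp [Module.finrank_fintype_fun_eq_card]
  let B : Module.Basis (Fin n) ℝ (Fin n → ℝ) := basisOfLinearIndependentOfCardEqFinrank hLI hcard
  have hB : ∀ i, B i = v i := fun i =>
    congrFun (coe_basisOfLinearIndependentOfCardEqFinrank hLI hcard) i
  have hrep : ∀ (k : ℤ) (z : Fin n → ℝ),
      phi M k z = B.equivFun.symm (fun j => μ j ^ k * B.equivFun z j) :=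
    fun k z => PairFar3.rep_phi hμ heig B hB k z
  have hcoord : ∀ (k : ℤ) (z : Fin n → ℝ) (j : Fin n),
      B.equivFun (phi M k z) j = μ j ^ k * B.equivFun z j := by
    intro k z j
    rw [hrep k z]
    exact congrFun (B.equivFun.apply_symm_apply _) j
  obtain ⟨γ, hγ0, hγ1, hγ2⟩ := PairFar3.exists_gamma B
  -- the expansion constant l
  let l : ℝ := Finset.univ.inf' Finset.univ_nonempty (fun i => max (μ i) (μ i)⁻¹)
  have hl : 1 < l := by
    rw [Finset.lt_inf'_iff]
    intro i _
    rcases lt_or_gt_of_ne (hμ1 i) with h | h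
    · exact lt_max_of_lt_right ((one_lt_inv₀ (hμ i)).mpr h)
    · exact lt_max_of_lt_left h
  have hl0 : (0:ℝ) < l := lt_trans one_pos hl
  have hlE : ∀ i, 1 < μ i → l ≤ μ i := by
    intro i hi
    have h1 : l ≤ max (μ i) (μ i)⁻¹ := Finset.inf'_le _ (Finset.mem_univ i)
    rwa [max_eq_left (by
      have : (μ i)⁻¹ < 1 := inv_lt_one_of_one_lt₀ hi
      linarith)] at h1
  have hlF : ∀ i, μ i < 1 → μ i ≤ l⁻¹ := by
    intro i hi
    have h1 : l ≤ max (μ i) (μ i)⁻¹ := Finset.inf'_le _ (Finset.mem_univ i)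
    rw [max_eq_right (by
      have h2 : (1:ℝ) ≤ (μ i)⁻¹ := (one_le_inv₀ (hμ i)).mpr hi.le
      linarith)] at h1
    rw [le_inv_comm₀ (hμ i) hl0]
    exact h1
  -- rv basics
  have hrvcoord : ∀ (z : Fin n → ℤ) (i : Fin n), |(z i : ℝ)| ≤ ‖rv z‖ := by
    intro z i
    have := norm_le_pi_norm (rv z) i
    simpa [rv, Real.norm_eq_abs] using this
  have hrv1 : ∀ x : Fin n → ℤ, x ≠ 0 → (1:ℝ) ≤ ‖rv x‖ := by
    intro x hx
    obtain ⟨i, hi⟩ : ∃ i, x i ≠ 0 := by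
      by_contra h
      push_neg at h
      exact hx (funext h)
    have h1 : (1:ℝ) ≤ |(x i : ℝ)| := by
      rw [← Int.cast_abs]
      exact_mod_cast Int.one_le_abs hi
    exact le_trans h1 (hrvcoord x i)
  have hrvD : ∀ w ∈ W, ‖rv w‖ ≤ D := by
    intro w hw
    rw [pi_norm_le_iff_of_nonneg hD.le]
    intro i
    simpa [rv, Real.norm_eq_abs] using ((hWmem w).mp hw).2 i
  have hcW : ∀ w ∈ W, ∀ i, |B.equivFun (rv w) i| ≤ γ * D := by
    intro w hw i
    calc |B.equivFun (rv w) i| ≤ γ * ‖rv w‖ := hγ1 _ i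
      _ ≤ γ * D := mul_le_mul_of_nonneg_left (hrvD w hw) hγ0.le
  -- positivity of expanding coordinates
  have hposE : ∀ x : Fin n → ℤ, x ≠ 0 → ∃ i, 1 < μ i ∧ 0 < |B.equivFun (rv x) i| := by
    intro x hx
    by_contra hcontra
    push_neg at hcontra
    have hzero : ∀ i, 1 < μ i → B.equivFun (rv x) i = 0 := by
      intro i hi
      exact abs_eq_zero.mp (le_antisymm (hcontra i hi) (abs_nonneg _))
    obtain ⟨m, hm⟩ := pow_unbounded_of_one_lt (γ * (γ * ‖rv x‖)) hl
    have hb : ‖phi M (m : ℤ) (rv x)‖ ≤ γ * ((l ^ m)⁻¹ * (γ * ‖rv x‖)) := by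
      rw [hrep]
      refine le_trans (hγ2 _) (mul_le_mul_of_nonneg_left ?_ hγ0.le)
      rw [pi_norm_le_iff_of_nonneg (by positivity)]
      intro j
      rcases lt_or_gt_of_ne (hμ1 j) with h | h
      · have h1 : |μ j ^ (m : ℤ)| ≤ (l ^ m)⁻¹ := by
          rw [abs_of_pos (zpow_pos (hμ j) _)]
          exact PairFar3.powH2 hl (hμ j) (hlF j h) le_rfl
        calc ‖μ j ^ (m : ℤ) * B.equivFun (rv x) j‖
            = |μ j ^ (m : ℤ)| * |B.equivFun (rv x) j| := abs_mul _ _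
          _ ≤ (l ^ m)⁻¹ * (γ * ‖rv x‖) :=
              mul_le_mul h1 (hγ1 _ j) (abs_nonneg _) (by positivity)
      · rw [hzero j h, mul_zero]
        simp only [norm_zero]
        positivity
    have hlat : (1 : ℝ) ≤ ‖phi M (m : ℤ) (rv x)‖ := by
      rw [phi_rv]
      exact hrv1 _ (hmulnz _ _ hx)
    have hlm : (0 : ℝ) < l ^ m := by positivity
    have hfin : γ * ((l ^ m)⁻¹ * (γ * ‖rv x‖)) < 1 := by
      rw [show γ * ((l ^ m)⁻¹ * (γ * ‖rv x‖)) = γ * (γ * ‖rv x‖) / l ^ m by ring,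
        div_lt_one hlm]
      exact hm
    linarith
  have hposF : ∀ x : Fin n → ℤ, x ≠ 0 → ∃ i, μ i < 1 ∧ 0 < |B.equivFun (rv x) i| := by
    intro x hx
    by_contra hcontra
    push_neg at hcontra
    have hzero : ∀ i, μ i < 1 → B.equivFun (rv x) i = 0 := by
      intro i hi
      exact abs_eq_zero.mp (le_antisymm (hcontra i hi) (abs_nonneg _))
    obtain ⟨m, hm⟩ := pow_unbounded_of_one_lt (γ * (γ * ‖rv x‖)) hl
    have hb : ‖phi M (-(m : ℤ)) (rv x)‖ ≤ γ * ((l ^ m)⁻¹ * (γ * ‖rv x‖)) := by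
      rw [hrep]
      refine le_trans (hγ2 _) (mul_le_mul_of_nonneg_left ?_ hγ0.le)
      rw [pi_norm_le_iff_of_nonneg (by positivity)]
      intro j
      rcases lt_or_gt_of_ne (hμ1 j) with h | h
      · rw [hzero j h, mul_zero]
        simp only [norm_zero]
        positivity
      · have h1 : |μ j ^ (-(m : ℤ))| ≤ (l ^ m)⁻¹ := by
          rw [abs_of_pos (zpow_pos (hμ j) _)]
          exact PairFar3.powH3 hl (hlE j h) le_rfl
        calc ‖μ j ^ (-(m : ℤ)) * B.equivFun (rv x) j‖
            = |μ j ^ (-(m : ℤ))| * |B.equivFun (rv x) j| := abs_mul _ _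
          _ ≤ (l ^ m)⁻¹ * (γ * ‖rv x‖) :=
              mul_le_mul h1 (hγ1 _ j) (abs_nonneg _) (by positivity)
    have hlat : (1 : ℝ) ≤ ‖phi M (-(m : ℤ)) (rv x)‖ := by
      rw [phi_rv]
      exact hrv1 _ (hmulnz _ _ hx)
    have hlm : (0 : ℝ) < l ^ m := by positivity
    have hfin : γ * ((l ^ m)⁻¹ * (γ * ‖rv x‖)) < 1 := by
      rw [show γ * ((l ^ m)⁻¹ * (γ * ‖rv x‖)) = γ * (γ * ‖rv x‖) / l ^ m by ring,
        div_lt_one hlm]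
      exact hm
    linarith
  -- uniform ε
  obtain ⟨ε, hε0, hε⟩ := PairFar3.unif W
      (fun w ε => (∃ i, 1 < μ i ∧ ε ≤ |B.equivFun (rv w) i|) ∧
        (∃ j, μ j < 1 ∧ ε ≤ |B.equivFun (rv w) j|))
      (by
        intro a ε ε' hle h
        exact ⟨h.1.imp (fun i hi => ⟨hi.1, le_trans hle hi.2⟩),
          h.2.imp (fun j hj => ⟨hj.1, le_trans hle hj.2⟩)⟩)
      (by
        intro w hw
        obtain ⟨i, hi1, hi2⟩ := hposE w ((hWmem w).mp hw).1
        obtain ⟨j, hj1, hj2⟩ := hposF w ((hWmem w).mp hw).1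
        exact ⟨min |B.equivFun (rv w) i| |B.equivFun (rv w) j|, lt_min hi2 hj2,
          ⟨i, hi1, min_le_left _ _⟩, ⟨j, hj1, min_le_right _ _⟩⟩)
  obtain ⟨K, hK⟩ : ∃ K : ℕ, 2 * (γ * D) < l ^ K * ε := by
    obtain ⟨K, hK⟩ := pow_unbounded_of_one_lt (2 * (γ * D) / ε) hl
    refine ⟨K, ?_⟩
    rwa [div_lt_iff₀ hε0] at hK
  have hL0 : (0 : ℝ) < l ^ K := by positivity
  have hLinv1 : (l ^ K)⁻¹ ≤ 1 := by
    rw [inv_le_one₀ hL0]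
    exact one_le_pow₀ hl.le
  have hΓ0 : (0 : ℝ) ≤ γ * D := by positivity
  -- Step D : triples of W-orbit elements force close witness times
  have stepD : ∀ (s t : ℤ) (w1 w2 w3 : Fin n → ℤ), w1 ∈ W → w2 ∈ W → w3 ∈ W →
      phi M s (rv w1) + phi M t (rv w2) = rv w3 →
      (K : ℤ) ≤ |s| → (K : ℤ) ≤ |t| → False := by
    intro s t w1 w2 w3 h1 h2 h3 hsum hs ht
    have hcs : ∀ i, μ i ^ s * B.equivFun (rv w1) i + μ i ^ t * B.equivFun (rv w2) i
        = B.equivFun (rv w3) i := by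
      intro i
      have h := congrArg (fun z => B.equivFun z i) hsum
      simp only [map_add, Pi.add_apply] at h
      rwa [hcoord s (rv w1) i, hcoord t (rv w2) i] at h
    have hup : ∀ (i : Fin n) (u : ℝ) (w : Fin n → ℤ), w ∈ W → 0 < u → u ≤ (l ^ K)⁻¹ →
        |u * B.equivFun (rv w) i| ≤ (l ^ K)⁻¹ * (γ * D) := by
      intro i u w hw hu0 hu
      rw [abs_mul, abs_of_pos hu0]
      exact mul_le_mul hu (hcW w hw i) (abs_nonneg _) (by positivity)
    have samesign : ∀ (i : Fin n) (a b : ℝ), ε ≤ |B.equivFun (rv w3) i| →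
        μ i ^ s * B.equivFun (rv w1) i = a → μ i ^ t * B.equivFun (rv w2) i = b →
        |a| ≤ (l ^ K)⁻¹ * (γ * D) → |b| ≤ (l ^ K)⁻¹ * (γ * D) → False := by
      intro i a b hiε ha hb hA hB2
      have e := hcs i
      rw [ha, hb] at e
      have : ε ≤ (l ^ K)⁻¹ * (γ * D) + (l ^ K)⁻¹ * (γ * D) :=
        le_trans hiε (by rw [← e]; exact le_trans (abs_add_le _ _) (add_le_add hA hB2))
      have h5 : l ^ K * ε ≤ 2 * (γ * D) := by
        have h6 := mul_le_mul_of_nonneg_left this hL0.le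
        calc l ^ K * ε ≤ l ^ K * ((l ^ K)⁻¹ * (γ * D) + (l ^ K)⁻¹ * (γ * D)) := h6
          _ = 2 * (γ * D) := by field_simp; ring
      linarith
    have mixed : ∀ (i : Fin n), ε ≤ |B.equivFun (rv w1) i| →
        l ^ K ≤ μ i ^ s → μ i ^ t ≤ (l ^ K)⁻¹ → False := by
      intro i hiε hbig hsmall
      have e := hcs i
      have hw2b : |μ i ^ t * B.equivFun (rv w2) i| ≤ (l ^ K)⁻¹ * (γ * D) :=
        hup i _ w2 h2 (zpow_pos (hμ i) _) hsmall
      have hw3b : |B.equivFun (rv w3) i| ≤ γ * D := hcW w3 h3 i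
      have low : l ^ K * ε ≤ |μ i ^ s * B.equivFun (rv w1) i| := by
        rw [abs_mul, abs_of_pos (zpow_pos (hμ i) _)]
        exact mul_le_mul hbig hiε hε0.le (le_trans hL0.le hbig)
      have tri : |μ i ^ s * B.equivFun (rv w1) i| ≤
          |B.equivFun (rv w3) i| + |μ i ^ t * B.equivFun (rv w2) i| := by
        have heq : μ i ^ s * B.equivFun (rv w1) i =
            (μ i ^ s * B.equivFun (rv w1) i + μ i ^ t * B.equivFun (rv w2) i) +
              (-(μ i ^ t * B.equivFun (rv w2) i)) := by ring
        rw [heq, e]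
        exact le_trans (abs_add_le _ _) (by rw [abs_neg])
      have h7 : (l ^ K)⁻¹ * (γ * D) ≤ γ * D := mul_le_of_le_one_left hΓ0 hLinv1
      linarith
    rcases le_abs.mp hs with hs1 | hs1 <;> rcases le_abs.mp ht with ht1 | ht1
    · -- K ≤ s, K ≤ t : use a contracting coordinate of w3
      obtain ⟨j, hj1, hjε⟩ := (hε w3 h3).2
      exact samesign j _ _ hjε rfl rfl
        (hup j _ w1 h1 (zpow_pos (hμ j) _) (PairFar3.powH2 hl (hμ j) (hlF j hj1) hs1))
        (hup j _ w2 h2 (zpow_pos (hμ j) _) (PairFar3.powH2 hl (hμ j) (hlF j hj1) ht1))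
    · -- K ≤ s, K ≤ -t : use an expanding coordinate of w1
      obtain ⟨i, hi1, hiε⟩ := (hε w1 h1).1
      exact mixed i hiε (PairFar3.powH1 hl (hlE i hi1) hs1)
        (PairFar3.powH3 hl (hlE i hi1) (by omega))
    · -- K ≤ -s, K ≤ t : use a contracting coordinate of w1
      obtain ⟨j, hj1, hjε⟩ := (hε w1 h1).2
      exact mixed j hjε (PairFar3.powH4 hl (hμ j) (hlF j hj1) (by omega))
        (PairFar3.powH2 hl (hμ j) (hlF j hj1) ht1)
    · -- K ≤ -s, K ≤ -t : use an expanding coordinate of w3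
      obtain ⟨i, hi1, hiε⟩ := (hε w3 h3).1
      exact samesign i _ _ hiε rfl rfl
        (hup i _ w1 h1 (zpow_pos (hμ i) _) (PairFar3.powH3 hl (hlE i hi1) (by omega)))
        (hup i _ w2 h2 (zpow_pos (hμ i) _) (PairFar3.powH3 hl (hlE i hi1) (by omega)))
  -- rv is additive
  have hrvadd : ∀ a b : Fin n → ℤ, rv (a + b) = rv a + rv b := by
    intro a b
    funext i
    simp [rv]
  have hrvneg : ∀ a : Fin n → ℤ, rv (-a) = -rv a := by
    intro a
    funext i
    simp [rv]
  -- the final pigeonhole argument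
  refine ⟨(4 * K + 1) * W.card + 1, ?_⟩
  intro S hS
  by_contra hcon
  push_neg at hcon
  have hbad : ∀ x ∈ S, ∀ y ∈ S, x ≠ y → ∃ k : ℤ,
      ((M ^ k : Matrix.GeneralLinearGroup (Fin n) ℤ) :
        Matrix (Fin n) (Fin n) ℤ).mulVec (x - y) ∈ W := by
    intro x hx y hy hxy
    obtain ⟨k, hk⟩ := hcon x hx y hy hxy
    exact ⟨k, key x y hxy k hk⟩
  have hS0 : S.Nonempty := Finset.card_pos.mp (by omega)
  obtain ⟨x₀, hx₀⟩ := hS0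
  set T := S.erase x₀ with hT
  have hTcard : T.card = S.card - 1 := Finset.card_erase_of_mem hx₀
  have hmemS : ∀ x : {a // a ∈ T}, (x : Fin n → ℤ) ∈ S := fun x => Finset.mem_of_mem_erase x.2
  have hneqx₀ : ∀ x : {a // a ∈ T}, x₀ ≠ (x : Fin n → ℤ) := fun x =>
    (Finset.ne_of_mem_erase x.2).symm
  have hch : ∀ x : {a // a ∈ T}, ∃ k : ℤ,
      ((M ^ k : Matrix.GeneralLinearGroup (Fin n) ℤ) :
        Matrix (Fin n) (Fin n) ℤ).mulVec (x₀ - (x : Fin n → ℤ)) ∈ W :=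
    fun x => hbad x₀ hx₀ x (hmemS x) (hneqx₀ x)
  choose kf hkf using hch
  set wf : {a // a ∈ T} → (Fin n → ℤ) := fun x =>
    ((M ^ (kf x) : Matrix.GeneralLinearGroup (Fin n) ℤ) :
      Matrix (Fin n) (Fin n) ℤ).mulVec (x₀ - (x : Fin n → ℤ)) with hwfdef
  have hwfW : ∀ x : {a // a ∈ T}, wf x ∈ W := fun x => hkf x
  have hphiwf : ∀ x : {a // a ∈ T},
      phi M (kf x) (rv (x₀ - (x : Fin n → ℤ))) = rv (wf x) :=
    fun x => phi_rv M (kf x) _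
  -- pairwise witness times are close
  have hkk : ∀ x y : {a // a ∈ T}, |kf x - kf y| ≤ 2 * (K : ℤ) := by
    intro x y
    by_cases hxy : (x : Fin n → ℤ) = (y : Fin n → ℤ)
    · rw [Subtype.ext hxy, sub_self, abs_zero]
      positivity
    · obtain ⟨k3, hk3⟩ := hbad x (hmemS x) y (hmemS y) hxy
      set wd : Fin n → ℤ := ((M ^ k3 : Matrix.GeneralLinearGroup (Fin n) ℤ) :
        Matrix (Fin n) (Fin n) ℤ).mulVec ((x : Fin n → ℤ) - (y : Fin n → ℤ)) with hwddef
      have hphiwd : phi M k3 (rv ((x : Fin n → ℤ) - (y : Fin n → ℤ))) = rv wd := phi_rv M k3 _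
      have hphiwd' : phi M k3 (rv ((y : Fin n → ℤ) - (x : Fin n → ℤ))) = rv (-wd) := by
        have h9 : ((y : Fin n → ℤ) - (x : Fin n → ℤ)) = -((x : Fin n → ℤ) - (y : Fin n → ℤ)) := by ring
        rw [h9, hrvneg, hrvneg]
        rw [show phi M k3 (-rv ((x : Fin n → ℤ) - (y : Fin n → ℤ))) = -phi M k3 (rv ((x : Fin n → ℤ) - (y : Fin n → ℤ)))
          from Matrix.mulVec_neg _ _, hphiwd]
      have hid1 : phi M (kf y - kf x) (rv (wf x)) + phi M (kf y - k3) (rv wd) = rv (wf y) := by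
        rw [← hphiwf x, ← hphiwd, ← phi_add, ← phi_add, sub_add_cancel, sub_add_cancel,
          ← phi_addv, ← hrvadd, ← hphiwf y]
        congr 2
        ring
      have hid2 : phi M (kf x - kf y) (rv (wf y)) + phi M (kf x - k3) (rv (-wd)) = rv (wf x) := by
        rw [← hphiwf y, ← hphiwd', ← phi_add, ← phi_add, sub_add_cancel, sub_add_cancel,
          ← phi_addv, ← hrvadd, ← hphiwf x]
        congr 2
        ring
      by_contra hgt
      push_neg at hgt
      have h0K : (0 : ℤ) ≤ (K : ℤ) := by positivity
      have e1 : (K : ℤ) ≤ |kf y - kf x| := by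
        rw [abs_sub_comm]
        linarith
      have e2 : |kf y - k3| < K := by
        by_contra h
        push_neg at h
        exact stepD (kf y - kf x) (kf y - k3) (wf x) wd (wf y) (hwfW x) hk3 (hwfW y) hid1 e1 h
      have e3 : (K : ℤ) ≤ |kf x - kf y| := by linarith
      have e4 : |kf x - k3| < K := by
        by_contra h
        push_neg at h
        exact stepD (kf x - kf y) (kf x - k3) (wf y) (-wd) (wf x) (hwfW y) (hWneg wd hk3)
          (hwfW x) hid2 e3 h
      have e5 : |kf x - kf y| ≤ |kf x - k3| + |k3 - kf y| := abs_sub_le _ _ _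
      rw [abs_sub_comm k3 (kf y)] at e5
      linarith
  -- pigeonhole
  have hTne : T.Nonempty := Finset.card_pos.mp (by omega)
  obtain ⟨xb, hxb⟩ := hTne
  have hmaps : ∀ x ∈ T.attach, (kf x - kf ⟨xb, hxb⟩, wf x) ∈
      (Finset.Icc (-(2 * (K : ℤ))) (2 * (K : ℤ))) ×ˢ W := by
    intro x _
    rw [Finset.mem_product]
    refine ⟨?_, hwfW x⟩
    rw [Finset.mem_Icc]
    have := abs_le.mp (hkk x ⟨xb, hxb⟩)
    exact ⟨this.1, this.2⟩
  have hcardP : ((Finset.Icc (-(2 * (K : ℤ))) (2 * (K : ℤ))) ×ˢ W).card = (4 * K + 1) * W.card := by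
    rw [Finset.card_product, Int.card_Icc]
    congr 1
    rw [show (2 * (K : ℤ) + 1 - -(2 * (K : ℤ))) = ((4 * K + 1 : ℕ) : ℤ) by push_cast; ring,
      Int.toNat_natCast]
  have hlt : ((Finset.Icc (-(2 * (K : ℤ))) (2 * (K : ℤ))) ×ˢ W).card < T.attach.card := by
    rw [Finset.card_attach, hTcard, hcardP]
    omega
  obtain ⟨x, _, y, _, hxy, heq⟩ := Finset.exists_ne_map_eq_of_card_lt_of_maps_to hlt hmaps
  have hk_eq : kf x = kf y := by
    have := congrArg Prod.fst heq
    simpa using this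
  have hw_eq : wf x = wf y := congrArg Prod.snd heq
  have hrveq : rv (x₀ - (x : Fin n → ℤ)) = rv (x₀ - (y : Fin n → ℤ)) := by
    apply phi_inj M (kf x)
    rw [hphiwf x, hk_eq, hphiwf y, hw_eq]
  have hsubeq : x₀ - (x : Fin n → ℤ) = x₀ - (y : Fin n → ℤ) := by
    funext i
    have h10 := congrFun hrveq i
    simp only [rv] at h10
    exact_mod_cast h10
  have hxyv : (x : Fin n → ℤ) = y := by
    have h11 : x₀ - (x₀ - (x : Fin n → ℤ)) = x₀ - (x₀ - (y : Fin n → ℤ)) := by rw [hsubeq]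
    rwa [sub_sub_cancel, sub_sub_cancel] at h11
  exact hxy (Subtype.ext hxyv)
end

section
/- Let φ ∈ GL_n(ℤ) be a hyperbolic, ℝ-diagonalizable automorphism with positive eigenvalues, and let G = ℤⁿ ⋊_φ ℤ with generator t of the ℤ factor. Then the cyclic subgroup H = ⟨t⟩ has bounded packing in G. -/
open Pointwise

/-- The automorphism of `ℤⁿ` (written multiplicatively) induced by `M ∈ GL_n(ℤ)`. -/
def matAut {n : ℕ} (M : Matrix.GeneralLinearGroup (Fin n) ℤ) :
    MulAut (Multiplicative (Fin n → ℤ)) :=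
  AddEquiv.toMultiplicative
  { toFun := fun v => (M : Matrix (Fin n) (Fin n) ℤ).mulVec v
    invFun := fun v => ((M⁻¹ : Matrix.GeneralLinearGroup (Fin n) ℤ) :
      Matrix (Fin n) (Fin n) ℤ).mulVec v
    left_inv := fun v => by
      show ((M⁻¹ : Matrix.GeneralLinearGroup (Fin n) ℤ) :
        Matrix (Fin n) (Fin n) ℤ).mulVec ((M : Matrix (Fin n) (Fin n) ℤ).mulVec v) = v
      rw [Matrix.mulVec_mulVec, ← Matrix.GeneralLinearGroup.coe_mul, inv_mul_cancel]
      simp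
    right_inv := fun v => by
      show (M : Matrix (Fin n) (Fin n) ℤ).mulVec
        (((M⁻¹ : Matrix.GeneralLinearGroup (Fin n) ℤ) :
          Matrix (Fin n) (Fin n) ℤ).mulVec v) = v
      rw [Matrix.mulVec_mulVec, ← Matrix.GeneralLinearGroup.coe_mul, mul_inv_cancel]
      simp
    map_add' := fun v w => by
      show (M : Matrix (Fin n) (Fin n) ℤ).mulVec (v + w) = _
      rw [Matrix.mulVec_add] }

/-- The action of `ℤ` on `ℤⁿ` given by iterating `M ∈ GL_n(ℤ)`. -/
def matAction {n : ℕ} (M : Matrix.GeneralLinearGroup (Fin n) ℤ) :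
    Multiplicative ℤ →* MulAut (Multiplicative (Fin n → ℤ)) :=
  zpowersHom (MulAut (Multiplicative (Fin n → ℤ))) (matAut M)

/-- The semidirect product `ℤⁿ ⋊_φ ℤ`. -/
abbrev SDP {n : ℕ} (M : Matrix.GeneralLinearGroup (Fin n) ℤ) : Type :=
  SemidirectProduct (Multiplicative (Fin n → ℤ)) (Multiplicative ℤ) (matAction M)

/-- The generator `t` of the `ℤ`-factor of `ℤⁿ ⋊_φ ℤ`. -/
def tGen {n : ℕ} (M : Matrix.GeneralLinearGroup (Fin n) ℤ) : SDP M :=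
  SemidirectProduct.inr (Multiplicative.ofAdd (1 : ℤ))

namespace BPaux

noncomputable section



theorem ramsey3 {β : Type*} [DecidableEq β] :
    ∀ m : ℕ, ∃ R : ℕ, ∀ W : Finset β, W.card ≤ m →
    ∀ (A : Finset ℕ) (col : ℕ → ℕ → β), R ≤ A.card →
    (∀ i ∈ A, ∀ j ∈ A, i < j → col i j ∈ W) →
    ∃ i ∈ A, ∃ j ∈ A, ∃ k ∈ A, i < j ∧ j < k ∧ col i j = col j k ∧ col i j = col i k := by
  intro m
  induction m with
  | zero =>
    refine ⟨2, ?_⟩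
    intro W hW A col hA hcol
    exfalso
    obtain ⟨a, ha, b, hb, hab⟩ := (Finset.one_lt_card (s := A)).mp (by omega)
    have hW0 : W = ∅ := Finset.card_eq_zero.mp (Nat.le_zero.mp hW)
    rcases lt_or_gt_of_ne hab with h | h
    · have := hcol a ha b hb h; simp [hW0] at this
    · have := hcol b hb a ha h; simp [hW0] at this
  | succ m ih =>
    obtain ⟨R', hR'⟩ := ih
    refine ⟨(m + 1) * (R' + 1) + 2, ?_⟩
    intro W hW A col hA hcol
    have hA1 : A.Nonempty := Finset.card_pos.mp (by omega)
    set a := A.min' hA1 with ha_def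
    have haA : a ∈ A := A.min'_mem hA1
    set rest := A.erase a with hrest_def
    have hrest_sub : rest ⊆ A := Finset.erase_subset _ _
    have hrest_card : (m + 1) * (R' + 1) + 1 ≤ rest.card := by
      have h0 : rest.card = A.card - 1 := by
        rw [hrest_def]; exact Finset.card_erase_of_mem haA
      omega
    have hlt : ∀ j ∈ rest, a < j := by
      intro j hj
      have hne := (Finset.mem_erase.mp hj).1
      exact lt_of_le_of_ne (A.min'_le j (hrest_sub hj)) (Ne.symm hne)
    have hmaps : ∀ j ∈ rest, col a j ∈ W := fun j hj =>
      hcol a haA j (hrest_sub hj) (hlt j hj)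
    have hWne : W.Nonempty := by
      obtain ⟨j, hj⟩ : rest.Nonempty := Finset.card_pos.mp (by omega)
      exact ⟨col a j, hmaps j hj⟩
    obtain ⟨w, hwW, hfib⟩ := Finset.exists_le_card_fiber_of_mul_le_card_of_maps_to (n := R' + 1) hmaps hWne
      (by
        have h1 : W.card * (R' + 1) ≤ (m + 1) * (R' + 1) := Nat.mul_le_mul_right _ hW
        omega)
    set J := rest.filter (fun j => col a j = w) with hJ_def
    have hJsubA : J ⊆ A := (Finset.filter_subset _ _).trans hrest_sub
    have hJw : ∀ j ∈ J, col a j = w := fun j hj => (Finset.mem_filter.mp hj).2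
    by_cases hex : ∃ i ∈ J, ∃ j ∈ J, i < j ∧ col i j = w
    · obtain ⟨i, hi, j, hj, hij, hcij⟩ := hex
      refine ⟨a, haA, i, hJsubA hi, j, hJsubA hj,
        hlt i ((Finset.filter_subset _ _) hi), hij, ?_, ?_⟩
      · rw [hJw i hi, hcij]
      · rw [hJw i hi, hJw j hj]
    · push_neg at hex
      have := hR' (W.erase w) (by
          have := Finset.card_erase_of_mem hwW
          omega) J col (by omega) (by
          intro i hi j hj hij
          exact Finset.mem_erase.mpr ⟨hex i hi j hj hij, hcol i (hJsubA hi) j (hJsubA hj) hij⟩)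
      obtain ⟨i, hi, j, hj, k, hk, h1, h2, h3, h4⟩ := this
      exact ⟨i, hJsubA hi, j, hJsubA hj, k, hJsubA hk, h1, h2, h3, h4⟩

theorem finite_wordBall {G : Type*} [Group G] (T₀ : Finset G) :
    ∀ m : ℕ, {g : G | ∃ l : List G, (∀ x ∈ l, x ∈ T₀) ∧ l.length ≤ m ∧ l.prod = g}.Finite := by
  intro m
  induction m with
  | zero =>
    apply Set.Finite.subset (Set.finite_singleton 1)
    rintro g ⟨l, -, hl, rfl⟩
    have : l = [] := List.length_eq_zero_iff.mp (Nat.le_zero.mp hl)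
    simp [this]
  | succ m ih =>
    apply Set.Finite.subset ((Set.finite_singleton (1 : G)).union
      (Set.Finite.image2 (· * ·) T₀.finite_toSet ih))
    rintro g ⟨l, hmem, hlen, rfl⟩
    cases l with
    | nil => left; simp
    | cons hd tl =>
      right
      refine Set.mem_image2_of_mem (hmem hd (by simp)) ?_
      exact ⟨tl, fun x hx => hmem x (by simp [hx]), by simpa using hlen, rfl⟩


-- auxiliary: normalized form
private theorem trinomial_norm {x : ℝ} (hx : 0 < x) {d s : ℤ} (hd : 0 ≤ d)
    (h : 1 + x ^ d = x ^ s) :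
    (1 < x → 0 < s ∧ d < s) ∧ (x < 1 → s < 0 ∧ s < d) := by
  have hxd : (0:ℝ) < x ^ d := zpow_pos hx d
  constructor
  · intro h1
    have hmono := zpow_right_strictMono₀ h1
    constructor
    · have : x ^ (0:ℤ) < x ^ s := by rw [zpow_zero]; nlinarith
      exact hmono.lt_iff_lt.mp this
    · have : x ^ d < x ^ s := by nlinarith
      exact hmono.lt_iff_lt.mp this
  · intro h1
    have hanti := zpow_right_strictAnti₀ hx h1
    constructor
    · have : x ^ (0:ℤ) < x ^ s := by rw [zpow_zero]; nlinarith
      exact hanti.lt_iff_gt.mp this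
    · have : x ^ d < x ^ s := by nlinarith
      exact hanti.lt_iff_gt.mp this

private theorem trinomial_main_norm {a b : ℝ} (ha : 0 < a) (hb : 0 < b)
    (ha1 : a ≠ 1) (hb1 : b ≠ 1) {d s : ℤ} (hd : 0 ≤ d)
    (hA : 1 + a ^ d = a ^ s) (hB : 1 + b ^ d = b ^ s) : a = b := by
  by_contra hne
  -- facts
  have FA := trinomial_norm ha hd hA
  have FB := trinomial_norm hb hd hB
  -- a key general lemma: if 1 < x < y and both satisfy, contradiction
  have keyGT : ∀ x y : ℝ, 1 < x → x < y → 1 + x ^ d = x ^ s → 1 + y ^ d = y ^ s →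
      0 < s → d < s → False := by
    intro x y hx hxy hXe hYe hs hds
    have hx0 : (0:ℝ) < x := by linarith
    have hy0 : (0:ℝ) < y := by linarith
    -- rewrite via natural exponents
    set dn := d.toNat with hdn
    set en := (s - d).toNat with hen
    have hdd : d = (dn : ℤ) := (Int.toNat_of_nonneg hd).symm
    have hee : s - d = (en : ℤ) := (Int.toNat_of_nonneg (by omega)).symm
    have hen0 : en ≠ 0 := by omega
    have hxs : x ^ s = x ^ dn * x ^ en := by
      rw [← zpow_natCast x dn, ← zpow_natCast x en, ← hdd, ← hee, ← zpow_add₀ (ne_of_gt hx0)]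
      ring_nf
    have hys : y ^ s = y ^ dn * y ^ en := by
      rw [← zpow_natCast y dn, ← zpow_natCast y en, ← hdd, ← hee, ← zpow_add₀ (ne_of_gt hy0)]
      ring_nf
    have hxd : x ^ d = (x ^ dn : ℝ) := by rw [hdd, zpow_natCast]
    have hyd : y ^ d = (y ^ dn : ℝ) := by rw [hdd, zpow_natCast]
    -- 1 = x^dn * (x^en - 1) = y^dn * (y^en - 1)
    have hX1 : x ^ dn * (x ^ en - 1) = 1 := by
      have := hXe; rw [hxs, hxd] at this; ring_nf at this ⊢; linarith
    have hY1 : y ^ dn * (y ^ en - 1) = 1 := by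
      have := hYe; rw [hys, hyd] at this; ring_nf at this ⊢; linarith
    have h1 : x ^ dn ≤ y ^ dn := pow_le_pow_left₀ (le_of_lt hx0) (le_of_lt hxy) dn
    have h2 : x ^ en < y ^ en := pow_lt_pow_left₀ hxy (le_of_lt hx0) hen0
    have h3 : (1:ℝ) < x ^ en := one_lt_pow₀ hx hen0
    have h4 : (0:ℝ) < x ^ dn := pow_pos hx0 dn
    nlinarith
  -- similarly for both less than one
  have keyLT : ∀ x y : ℝ, 0 < x → x < y → y < 1 → 1 + x ^ d = x ^ s → 1 + y ^ d = y ^ s →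
      s < 0 → False := by
    intro x y hx0 hxy hy1 hXe hYe hs
    have hy0 : (0:ℝ) < y := by linarith
    have hx1 : x < 1 := by linarith
    set dn := d.toNat with hdn
    set sn := (-s).toNat with hsn
    have hdd : d = (dn : ℤ) := (Int.toNat_of_nonneg hd).symm
    have hss : -s = (sn : ℤ) := (Int.toNat_of_nonneg (by omega)).symm
    have hsn0 : sn ≠ 0 := by omega
    have hxd : x ^ d = (x ^ dn : ℝ) := by rw [hdd, zpow_natCast]
    have hyd : y ^ d = (y ^ dn : ℝ) := by rw [hdd, zpow_natCast]
    have hxs : x ^ s = ((x⁻¹) ^ sn : ℝ) := by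
      rw [← zpow_natCast x⁻¹ sn, ← hss, inv_zpow, ← zpow_neg, neg_neg]
    have hys : y ^ s = ((y⁻¹) ^ sn : ℝ) := by
      rw [← zpow_natCast y⁻¹ sn, ← hss, inv_zpow, ← zpow_neg, neg_neg]
    have hinv : y⁻¹ < x⁻¹ := by
      exact inv_strictAnti₀ hx0 hxy
    have h1 : (y⁻¹:ℝ) ^ sn < (x⁻¹) ^ sn :=
      pow_lt_pow_left₀ hinv (le_of_lt (inv_pos.mpr hy0)) hsn0
    have h2 : x ^ dn ≤ y ^ dn := pow_le_pow_left₀ (le_of_lt hx0) (le_of_lt hxy) dn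
    rw [hxd, hxs] at hXe
    rw [hyd, hys] at hYe
    linarith
  rcases lt_trichotomy a 1 with haL | haE | haG
  · rcases lt_trichotomy b 1 with hbL | hbE | hbG
    · -- both < 1
      rcases lt_or_gt_of_ne hne with hab | hab
      · exact keyLT a b ha hab hbL hA hB (FA.2 haL).1
      · exact keyLT b a hb hab haL hB hA (FB.2 hbL).1
    · exact hb1 hbE
    · -- a < 1, b > 1 : s < 0 and 0 < s
      have := (FA.2 haL).1
      have := (FB.1 hbG).1
      omega
  · exact ha1 haE
  · rcases lt_trichotomy b 1 with hbL | hbE | hbG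
    · have := (FA.1 haG).1
      have := (FB.2 hbL).1
      omega
    · exact hb1 hbE
    · rcases lt_or_gt_of_ne hne with hab | hab
      · exact keyGT a b haG hab hA hB (FA.1 haG).1 (FA.1 haG).2
      · exact keyGT b a hbG hab hB hA (FB.1 hbG).1 (FB.1 hbG).2

theorem trinomial_rigidity {a b : ℝ} (ha : 0 < a) (hb : 0 < b)
    (ha1 : a ≠ 1) (hb1 : b ≠ 1) {p₁ p₂ p₃ : ℤ}
    (hA : a ^ p₁ + a ^ p₂ = a ^ p₃) (hB : b ^ p₁ + b ^ p₂ = b ^ p₃) : a = b := by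
  have norm : ∀ x : ℝ, 0 < x → ∀ q₁ q₂ q₃ : ℤ, q₁ ≤ q₂ → x ^ q₁ + x ^ q₂ = x ^ q₃ →
      1 + x ^ (q₂ - q₁) = x ^ (q₃ - q₁) := by
    intro x hx q₁ q₂ q₃ _ he
    have hx0 : x ≠ 0 := ne_of_gt hx
    have := congrArg (· * x ^ (-q₁)) he
    simp only [add_mul, ← zpow_add₀ hx0] at this
    rw [add_neg_cancel, zpow_zero] at this
    simpa [sub_eq_add_neg] using this
  rcases le_total p₁ p₂ with hle | hle
  · exact trinomial_main_norm ha hb ha1 hb1 (by omega)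
      (norm a ha p₁ p₂ p₃ hle hA) (norm b hb p₁ p₂ p₃ hle hB)
  · rw [add_comm] at hA hB
    exact trinomial_main_norm ha hb ha1 hb1 (by omega)
      (norm a ha p₂ p₁ p₃ hle hA) (norm b hb p₂ p₁ p₃ hle hB)




variable {n : ℕ}

def castVec (w : Fin n → ℤ) : Fin n → ℝ := fun i => (w i : ℝ)

theorem castVec_mulVec (N : Matrix (Fin n) (Fin n) ℤ) (w : Fin n → ℤ) :
    castVec (N.mulVec w) = (N.map (fun x : ℤ => (x : ℝ))).mulVec (castVec w) := by
  funext i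
  simp only [castVec, Matrix.mulVec, dotProduct, Matrix.map_apply]
  push_cast
  rfl

def castGLHom : Matrix.GeneralLinearGroup (Fin n) ℤ →* Matrix.GeneralLinearGroup (Fin n) ℝ :=
  Units.map ((Int.castRingHom ℝ).mapMatrix).toMonoidHom

theorem castGL_coe (M : Matrix.GeneralLinearGroup (Fin n) ℤ) :
    ((castGLHom M : Matrix.GeneralLinearGroup (Fin n) ℝ) : Matrix (Fin n) (Fin n) ℝ)
      = (M : Matrix (Fin n) (Fin n) ℤ).map (fun x : ℤ => (x : ℝ)) := rfl

theorem cast_glpow_mulVec (M : Matrix.GeneralLinearGroup (Fin n) ℤ) (p : ℤ) (w : Fin n → ℤ) :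
    castVec (((M ^ p : Matrix.GeneralLinearGroup (Fin n) ℤ) :
        Matrix (Fin n) (Fin n) ℤ).mulVec w)
      = (((castGLHom M ^ p : Matrix.GeneralLinearGroup (Fin n) ℝ)) :
          Matrix (Fin n) (Fin n) ℝ).mulVec (castVec w) := by
  rw [castVec_mulVec, ← castGL_coe, ← map_zpow]

theorem no_int_eigvec (M : Matrix.GeneralLinearGroup (Fin n) ℤ) {μ₀ : ℝ}
    (hpos : 0 < μ₀) (hne : μ₀ ≠ 1) {u : Fin n → ℤ} (hu : u ≠ 0)
    (heig : ((M : Matrix (Fin n) (Fin n) ℤ).map (fun x : ℤ => (x : ℝ))).mulVec (castVec u)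
      = μ₀ • castVec u) : False := by
  set A := castGLHom M with hA
  have heig' : (A : Matrix (Fin n) (Fin n) ℝ).mulVec (castVec u) = μ₀ • castVec u := by
    rw [castGL_coe]; exact heig
  have hAinv : ((A⁻¹ : Matrix.GeneralLinearGroup (Fin n) ℝ) :
      Matrix (Fin n) (Fin n) ℝ).mulVec (castVec u) = μ₀⁻¹ • castVec u := by
    have h1 : ((A⁻¹ : Matrix.GeneralLinearGroup (Fin n) ℝ) :
        Matrix (Fin n) (Fin n) ℝ).mulVec ((A : Matrix (Fin n) (Fin n) ℝ).mulVec (castVec u))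
        = castVec u := by
      rw [Matrix.mulVec_mulVec, ← Matrix.GeneralLinearGroup.coe_mul, inv_mul_cancel]
      simp
    rw [heig', Matrix.mulVec_smul] at h1
    have h2 := congrArg (fun z => μ₀⁻¹ • z) h1
    simp only [smul_smul, inv_mul_cancel₀ (ne_of_gt hpos), one_smul] at h2
    exact h2
  have key : ∀ p : ℤ, ((A ^ p : Matrix.GeneralLinearGroup (Fin n) ℝ) :
      Matrix (Fin n) (Fin n) ℝ).mulVec (castVec u) = μ₀ ^ p • castVec u := by
    intro p
    induction p using Int.induction_on with
    | zero => simp [Matrix.one_mulVec]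
    | succ k ih =>
      rw [zpow_add_one, Units.val_mul, ← Matrix.mulVec_mulVec, heig', Matrix.mulVec_smul, ih,
        smul_smul, zpow_add_one₀ (ne_of_gt hpos), mul_comm]
    | pred k ih =>
      rw [zpow_sub_one, Units.val_mul, ← Matrix.mulVec_mulVec, hAinv, Matrix.mulVec_smul, ih,
        smul_smul, zpow_sub_one₀ (ne_of_gt hpos), mul_comm]
  obtain ⟨i₀, hi₀⟩ := Function.ne_iff.mp hu
  have hc : (0:ℝ) < |(u i₀ : ℝ)| := by
    rw [abs_pos]
    exact_mod_cast hi₀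
  have hbound : ∀ p : ℤ, (1:ℝ) ≤ μ₀ ^ p * |(u i₀ : ℝ)| := by
    intro p
    have hk := key p
    rw [← cast_glpow_mulVec] at hk
    have hz := congrFun hk i₀
    simp only [castVec, Pi.smul_apply, smul_eq_mul] at hz
    set z : ℤ := ((M ^ p : Matrix.GeneralLinearGroup (Fin n) ℤ) :
      Matrix (Fin n) (Fin n) ℤ).mulVec u i₀ with hzdef
    have hz0 : z ≠ 0 := by
      intro h0
      rw [h0] at hz
      simp only [Int.cast_zero] at hz
      have : μ₀ ^ p * (u i₀ : ℝ) ≠ 0 :=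
        mul_ne_zero (zpow_ne_zero _ (ne_of_gt hpos)) (by exact_mod_cast hi₀)
      exact this hz.symm
    have h1 : (1:ℝ) ≤ |(z : ℝ)| := by
      have := Int.one_le_abs hz0
      calc (1:ℝ) ≤ (|z| : ℝ) := by exact_mod_cast this
        _ = |(z:ℝ)| := by push_cast; rfl
    rw [hz] at h1
    rwa [abs_mul, abs_of_pos (zpow_pos hpos p)] at h1
  rcases lt_or_gt_of_ne hne with hlt | hgt
  · obtain ⟨m, hm⟩ := exists_pow_lt_of_lt_one (one_div_pos.mpr hc) hlt
    have := hbound (m : ℤ)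
    rw [zpow_natCast] at this
    have h2 : μ₀ ^ m * |(u i₀ : ℝ)| < (1 / |(u i₀ : ℝ)|) * |(u i₀ : ℝ)| :=
      mul_lt_mul_of_pos_right hm hc
    rw [one_div_mul_cancel (ne_of_gt hc)] at h2
    linarith
  · have hinv : μ₀⁻¹ < 1 := inv_lt_one_of_one_lt₀ hgt
    obtain ⟨m, hm⟩ := exists_pow_lt_of_lt_one (one_div_pos.mpr hc) hinv
    have := hbound (-(m : ℤ))
    rw [zpow_neg, zpow_natCast, ← inv_pow] at this
    have h2 : μ₀⁻¹ ^ m * |(u i₀ : ℝ)| < (1 / |(u i₀ : ℝ)|) * |(u i₀ : ℝ)| :=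
      mul_lt_mul_of_pos_right hm hc
    rw [one_div_mul_cancel (ne_of_gt hc)] at h2
    linarith

theorem repr_mulVec {v : Fin n → Fin n → ℝ} {μ : Fin n → ℝ}
    (b : Module.Basis (Fin n) ℝ (Fin n → ℝ)) (hb : ⇑b = v)
    {Amat : Matrix (Fin n) (Fin n) ℝ} (heig : ∀ i, Amat.mulVec (v i) = μ i • v i)
    (u : Fin n → ℝ) (l : Fin n) :
    b.repr (Amat.mulVec u) l = μ l * b.repr u l := by
  have hrepr : Amat.mulVec u = ∑ i, b.repr u i • (μ i • b i) := by
    conv_lhs => rw [← b.sum_repr u]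
    rw [show Amat.mulVec (∑ i, b.repr u i • b i)
        = Amat.mulVecLin (∑ i, b.repr u i • b i) from rfl, map_sum]
    simp only [map_smul, Matrix.mulVecLin_apply]
    congr 1
    funext i
    rw [hb, heig i]
  rw [hrepr, map_sum]
  simp only [map_smul, Module.Basis.repr_self, Finsupp.smul_apply, Finsupp.smul_single,
    smul_eq_mul, Finsupp.single_apply, Finset.sum_apply']
  rw [Finset.sum_eq_single l]
  · simp [mul_comm]
  · intro i _ hne
    simp [hne]
  · intro h
    exact absurd (Finset.mem_univ l) h

theorem no_triangle (M : Matrix.GeneralLinearGroup (Fin n) ℤ)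
    {v : Fin n → Fin n → ℝ} {μ : Fin n → ℝ}
    (hli : LinearIndependent ℝ v) (hμ : ∀ i, 0 < μ i ∧ μ i ≠ 1)
    (heig : ∀ i, ((M : Matrix (Fin n) (Fin n) ℤ).map (fun x : ℤ => (x : ℝ))).mulVec (v i)
      = μ i • v i)
    {w : Fin n → ℤ} (hw : w ≠ 0) (p₁ p₂ p₃ : ℤ)
    (hrel : castVec (((M ^ p₁ : Matrix.GeneralLinearGroup (Fin n) ℤ) :
          Matrix (Fin n) (Fin n) ℤ).mulVec w)
        + castVec (((M ^ p₂ : Matrix.GeneralLinearGroup (Fin n) ℤ) :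
          Matrix (Fin n) (Fin n) ℤ).mulVec w)
        = castVec (((M ^ p₃ : Matrix.GeneralLinearGroup (Fin n) ℤ) :
          Matrix (Fin n) (Fin n) ℤ).mulVec w)) : False := by
  rcases Nat.eq_zero_or_pos n with hn | hn
  · exact hw (funext fun i => absurd i.2 (by omega))
  haveI : Nonempty (Fin n) := ⟨⟨0, hn⟩⟩
  set b : Module.Basis (Fin n) ℝ (Fin n → ℝ) :=
    basisOfLinearIndependentOfCardEqFinrank hli (by simp) with hbdef
  have hb : ⇑b = v := coe_basisOfLinearIndependentOfCardEqFinrank hli _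
  set A := castGLHom M with hAdef
  have heigA : ∀ i, ((A : Matrix.GeneralLinearGroup (Fin n) ℝ) :
      Matrix (Fin n) (Fin n) ℝ).mulVec (v i) = μ i • v i := by
    intro i; rw [castGL_coe]; exact heig i
  have hAinv : ∀ (u : Fin n → ℝ) (l : Fin n),
      b.repr (((A⁻¹ : Matrix.GeneralLinearGroup (Fin n) ℝ) :
        Matrix (Fin n) (Fin n) ℝ).mulVec u) l = (μ l)⁻¹ * b.repr u l := by
    intro u l
    have h1 : ((A : Matrix.GeneralLinearGroup (Fin n) ℝ) : Matrix (Fin n) (Fin n) ℝ).mulVec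
        (((A⁻¹ : Matrix.GeneralLinearGroup (Fin n) ℝ) :
          Matrix (Fin n) (Fin n) ℝ).mulVec u) = u := by
      rw [Matrix.mulVec_mulVec, ← Matrix.GeneralLinearGroup.coe_mul, mul_inv_cancel]
      simp
    have h2 := repr_mulVec b hb heigA
      (((A⁻¹ : Matrix.GeneralLinearGroup (Fin n) ℝ) : Matrix (Fin n) (Fin n) ℝ).mulVec u) l
    rw [h1] at h2
    field_simp [(hμ l).1.ne'] at h2 ⊢
    linarith [h2]
  have coordz : ∀ (p : ℤ) (u : Fin n → ℝ) (l : Fin n),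
      b.repr (((A ^ p : Matrix.GeneralLinearGroup (Fin n) ℝ) :
        Matrix (Fin n) (Fin n) ℝ).mulVec u) l = μ l ^ p * b.repr u l := by
    intro p
    induction p using Int.induction_on with
    | zero => intro u l; simp [Matrix.one_mulVec]
    | succ k ih =>
      intro u l
      rw [zpow_add_one, Units.val_mul, ← Matrix.mulVec_mulVec]
      rw [ih, repr_mulVec b hb heigA, zpow_add_one₀ (ne_of_gt (hμ l).1)]
      ring
    | pred k ih =>
      intro u l
      rw [zpow_sub_one, Units.val_mul, ← Matrix.mulVec_mulVec, ih, hAinv,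
        zpow_sub_one₀ (ne_of_gt (hμ l).1)]
      ring
  set W := castVec w with hWdef
  have hx : ∃ l₀, b.repr W l₀ ≠ 0 := by
    by_contra hc
    push_neg at hc
    have h1 : b.repr W = 0 := DFunLike.ext _ _ hc
    have hW0 : W = 0 := (LinearEquiv.map_eq_zero_iff b.repr).mp h1
    apply hw
    funext i
    have h2 := congrFun hW0 i
    rw [hWdef] at h2
    simpa [castVec, Int.cast_eq_zero] using h2
  obtain ⟨l₀, hx₀⟩ := hx
  by_cases hall : ∀ l, b.repr W l ≠ 0 → μ l = μ l₀
  · apply no_int_eigvec M (hμ l₀).1 (hμ l₀).2 hw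
    rw [← castGL_coe, ← hAdef]
    apply b.repr.injective
    refine DFunLike.ext _ _ fun l => ?_
    rw [repr_mulVec b hb heigA, map_smul]
    by_cases h0 : b.repr W l = 0
    · simp [h0, ← hWdef]
    · rw [hall l h0]
      simp [Finsupp.smul_apply, smul_eq_mul]
  · push_neg at hall
    obtain ⟨l₁, hx₁, hμne⟩ := hall
    have hrel' : ((A ^ p₁ : Matrix.GeneralLinearGroup (Fin n) ℝ) :
          Matrix (Fin n) (Fin n) ℝ).mulVec W
        + ((A ^ p₂ : Matrix.GeneralLinearGroup (Fin n) ℝ) :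
          Matrix (Fin n) (Fin n) ℝ).mulVec W
        = ((A ^ p₃ : Matrix.GeneralLinearGroup (Fin n) ℝ) :
          Matrix (Fin n) (Fin n) ℝ).mulVec W := by
      rw [hAdef, hWdef, ← cast_glpow_mulVec, ← cast_glpow_mulVec, ← cast_glpow_mulVec]
      exact hrel
    have key : ∀ l, b.repr W l ≠ 0 → μ l ^ p₁ + μ l ^ p₂ = μ l ^ p₃ := by
      intro l hl
      have h1 := congrArg (fun z => b.repr z l) hrel'
      simp only [map_add, Finsupp.add_apply] at h1
      rw [coordz, coordz, coordz] at h1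
      have h2 : (μ l ^ p₁ + μ l ^ p₂) * b.repr W l = μ l ^ p₃ * b.repr W l := by
        ring_nf
        ring_nf at h1
        linarith
      exact mul_right_cancel₀ hl h2
    exact hμne (trinomial_rigidity (hμ l₁).1 (hμ l₀).1 (hμ l₁).2 (hμ l₀).2
      (key l₁ hx₁) (key l₀ hx₀))




section SDPHelp

variable {n : ℕ} (M : Matrix.GeneralLinearGroup (Fin n) ℤ)

theorem tGen_zpow (k : ℤ) :
    (tGen M) ^ k = SemidirectProduct.inr (Multiplicative.ofAdd k) := by
  have h1 : (Multiplicative.ofAdd (1:ℤ)) ^ k = Multiplicative.ofAdd k := by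
    rw [← ofAdd_zsmul]
    norm_num
  rw [tGen, ← map_zpow, h1]

theorem mem_H_iff (g : SDP M) :
    g ∈ Subgroup.zpowers (tGen M) ↔ g.left = 1 := by
  constructor
  · intro hmem
    obtain ⟨k, rfl⟩ := Subgroup.mem_zpowers_iff.mp hmem
    rw [tGen_zpow]
    exact SemidirectProduct.left_inr _
  · intro hl
    refine Subgroup.mem_zpowers_iff.mpr ⟨Multiplicative.toAdd g.right, ?_⟩
    rw [tGen_zpow]
    ext
    · rw [SemidirectProduct.left_inr, hl]
    · rw [SemidirectProduct.right_inr, ofAdd_toAdd]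

theorem left_conj (c e : Multiplicative ℤ) (g : SDP M) :
    (SemidirectProduct.inr c * g * SemidirectProduct.inr e).left
      = matAction M c g.left := by
  simp [SemidirectProduct.mul_left, SemidirectProduct.left_inr, map_one]

theorem left_inv_mul (g₁ g₂ : SDP M) :
    (g₁⁻¹ * g₂).left = matAction M (g₁.right)⁻¹ (g₁.left⁻¹ * g₂.left) := by
  rw [SemidirectProduct.mul_left, SemidirectProduct.inv_left, SemidirectProduct.inv_right,
    map_mul]

theorem matAction_matAction (ρ σ : Multiplicative ℤ) (z : Multiplicative (Fin n → ℤ)) :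
    matAction M ρ (matAction M σ z) = matAction M (ρ * σ) z := by
  rw [map_mul, MulAut.mul_apply]

theorem toAdd_matAut (a : Multiplicative (Fin n → ℤ)) :
    Multiplicative.toAdd (matAut M a)
      = (M : Matrix (Fin n) (Fin n) ℤ).mulVec (Multiplicative.toAdd a) := rfl

theorem toAdd_matAut_inv (a : Multiplicative (Fin n → ℤ)) :
    Multiplicative.toAdd ((matAut M)⁻¹ a)
      = ((M⁻¹ : Matrix.GeneralLinearGroup (Fin n) ℤ) :
          Matrix (Fin n) (Fin n) ℤ).mulVec (Multiplicative.toAdd a) := rfl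

theorem toAdd_matAut_zpow (k : ℤ) : ∀ a : Multiplicative (Fin n → ℤ),
    Multiplicative.toAdd ((matAut M ^ k) a)
      = ((M ^ k : Matrix.GeneralLinearGroup (Fin n) ℤ) :
          Matrix (Fin n) (Fin n) ℤ).mulVec (Multiplicative.toAdd a) := by
  induction k using Int.induction_on with
  | zero => intro a; simp [Matrix.one_mulVec]
  | succ k ih =>
    intro a
    rw [show matAut M ^ ((k:ℤ)+1) = matAut M ^ (k:ℤ) * matAut M from zpow_add_one _ _,
      show (M:Matrix.GeneralLinearGroup (Fin n) ℤ) ^ ((k:ℤ)+1) = M ^ (k:ℤ) * M from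
        zpow_add_one _ _,
      MulAut.mul_apply, ih, toAdd_matAut, Matrix.mulVec_mulVec,
      ← Matrix.GeneralLinearGroup.coe_mul]
  | pred k ih =>
    intro a
    rw [show matAut M ^ (-(k:ℤ)-1) = matAut M ^ (-(k:ℤ)) * (matAut M)⁻¹ from zpow_sub_one _ _,
      show (M:Matrix.GeneralLinearGroup (Fin n) ℤ) ^ (-(k:ℤ)-1) = M ^ (-(k:ℤ)) * M⁻¹ from
        zpow_sub_one _ _,
      MulAut.mul_apply, ih, toAdd_matAut_inv, Matrix.mulVec_mulVec,
      ← Matrix.GeneralLinearGroup.coe_mul]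

theorem toAdd_matAction (ρ : Multiplicative ℤ) (a : Multiplicative (Fin n → ℤ)) :
    Multiplicative.toAdd (matAction M ρ a)
      = ((M ^ (Multiplicative.toAdd ρ) : Matrix.GeneralLinearGroup (Fin n) ℤ) :
          Matrix (Fin n) (Fin n) ℤ).mulVec (Multiplicative.toAdd a) := by
  rw [show matAction M ρ = matAut M ^ (Multiplicative.toAdd ρ) from rfl, toAdd_matAut_zpow]

end SDPHelp

end

end BPaux

/-- If `φ ∈ GL_n(ℤ)` is hyperbolic and diagonalizable over `ℝ` with positive
eigenvalues, then the cyclic subgroup `⟨t⟩` has bounded packing in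
`G = ℤⁿ ⋊_φ ℤ` with its word metric. -/
theorem bounded_packing_of_t {n : ℕ}
    (M : Matrix.GeneralLinearGroup (Fin n) ℤ)
    (hdiag : ∃ (v : Fin n → Fin n → ℝ) (μ : Fin n → ℝ),
      LinearIndependent ℝ v ∧ (∀ i, 0 < μ i ∧ μ i ≠ 1) ∧
      ∀ i, ((M : Matrix (Fin n) (Fin n) ℤ).map (fun x : ℤ => (x : ℝ))).mulVec (v i)
        = μ i • v i)
    (d : SDP M → SDP M → ℝ) (hd : IsWordMetric d) :
    BoundedPacking d (Subgroup.zpowers (tGen M)) := by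
  classical
  obtain ⟨v, μ, hli, hμ, heig⟩ := hdiag
  obtain ⟨S, hclos, hdf⟩ := hd
  intro r hr
  set t : SDP M := tGen M with ht
  set H : Subgroup (SDP M) := Subgroup.zpowers (tGen M) with hH
  set T₀ : Finset (SDP M) := S ∪ S.image (·⁻¹) with hT₀
  set nr : ℕ := ⌈r⌉₊ with hnr
  have hballfin := BPaux.finite_wordBall T₀ nr
  set Wfin : Finset (Fin n → ℤ) :=
    (hballfin.image (fun g => Multiplicative.toAdd g.left)).toFinset with hWfin
  obtain ⟨N, hN⟩ := BPaux.ramsey3 (β := Fin n → ℤ) Wfin.card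
  refine ⟨N, ?_⟩
  intro C hCcos hCcard
  by_contra hcon
  push_neg at hcon
  set L := C.toList with hL
  have hlen : L.length = C.card := Finset.length_toList C
  set Xf : ℕ → Set (SDP M) := fun i => L.getD i ∅ with hXf
  have hXmem : ∀ i, i < L.length → Xf i ∈ C := by
    intro i hi
    have : Xf i = L.get ⟨i, hi⟩ := by
      rw [hXf]; exact List.getD_eq_getElem _ _ hi
    rw [this]
    exact Finset.mem_toList.mp (L.get_mem ⟨i, hi⟩)
  have hXne : ∀ i j, i < L.length → j < L.length → i ≠ j → Xf i ≠ Xf j := by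
    intro i j hi hj hne heq
    rw [hXf] at heq
    simp only [List.getD_eq_getElem _ _ hi, List.getD_eq_getElem _ _ hj] at heq
    have := (List.Nodup.get_inj_iff C.nodup_toList (i := ⟨i, hi⟩) (j := ⟨j, hj⟩)).mp heq
    exact hne (by simpa using congrArg Fin.val this)
  have hgf : ∀ i, ∃ g : SDP M, i < L.length → Xf i = g • (H : Set (SDP M)) := by
    intro i
    by_cases hi : i < L.length
    · obtain ⟨g, hg⟩ := hCcos (Xf i) (hXmem i hi)
      exact ⟨g, fun _ => hg⟩
    · exact ⟨1, fun h => absurd h hi⟩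
  choose gf hgfs using hgf
  have KEY : ∀ i j, i < j → j < L.length →
      ∃ w : Fin n → ℤ, (w ∈ Wfin ∧ w ≠ 0) ∧ ∃ p : ℤ,
        Multiplicative.toAdd (gf j).left - Multiplicative.toAdd (gf i).left
          = ((M ^ p : Matrix.GeneralLinearGroup (Fin n) ℤ) :
              Matrix (Fin n) (Fin n) ℤ).mulVec w := by
    intro i j hij hj
    have hi : i < L.length := lt_trans hij hj
    have hne := hXne i j hi hj (Nat.ne_of_lt hij)
    obtain ⟨x, hx, y, hy, hdxy⟩ := hcon (Xf i) (hXmem i hi) (Xf j) (hXmem j hj) hne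
    rw [hgfs i hi] at hx
    rw [hgfs j hj] at hy
    obtain ⟨u₁, hu₁, hxe⟩ := Set.mem_smul_set.mp hx
    obtain ⟨u₂, hu₂, hye⟩ := Set.mem_smul_set.mp hy
    obtain ⟨k, htk⟩ := Subgroup.mem_zpowers_iff.mp (SetLike.mem_coe.mp hu₁)
    obtain ⟨m, htm⟩ := Subgroup.mem_zpowers_iff.mp (SetLike.mem_coe.mp hu₂)
    have hxeq : x = gf i * t ^ k := by rw [← hxe, smul_eq_mul, htk]
    have hyeq : y = gf j * t ^ m := by rw [← hye, smul_eq_mul, htm]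
    -- the short word
    have hword : ∃ l : List (SDP M), (∀ z ∈ l, z ∈ T₀) ∧ l.length ≤ nr ∧ l.prod = x⁻¹ * y := by
      have hmem : x⁻¹ * y ∈ Subgroup.closure (S : Set (SDP M)) := by rw [hclos]; trivial
      rw [← Subgroup.mem_toSubmonoid, Subgroup.closure_toSubmonoid] at hmem
      obtain ⟨l₀, hl₀m, hl₀p⟩ := Submonoid.exists_list_of_mem_closure hmem
      have hEne : Set.Nonempty {z : ℝ | ∃ l : List (SDP M),
          (∀ w ∈ l, w ∈ S ∨ w⁻¹ ∈ S) ∧ l.prod = x⁻¹ * y ∧ (l.length : ℝ) = z} := by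
        refine ⟨l₀.length, l₀, ?_, hl₀p, rfl⟩
        intro z hz
        rcases hl₀m z hz with h | h
        · exact Or.inl h
        · exact Or.inr (Set.mem_inv.mp h)
      rw [hdf x y] at hdxy
      obtain ⟨e, ⟨l₂, hl₂m, hl₂p, rfl⟩, helt⟩ := exists_lt_of_csInf_lt hEne hdxy
      refine ⟨l₂, ?_, ?_, hl₂p⟩
      · intro z hz
        rcases hl₂m z hz with h | h
        · exact Finset.mem_union_left _ h
        · exact Finset.mem_union_right _ (Finset.mem_image.mpr ⟨z⁻¹, h, inv_inv z⟩)
      · have hlt : (l₂.length : ℝ) < (nr : ℝ) := lt_of_lt_of_le helt (Nat.le_ceil r)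
        exact le_of_lt (by exact_mod_cast hlt)
    have hball : x⁻¹ * y ∈ {g : SDP M | ∃ l : List (SDP M),
        (∀ z ∈ l, z ∈ T₀) ∧ l.length ≤ nr ∧ l.prod = g} := hword
    have hwW : Multiplicative.toAdd (x⁻¹ * y).left ∈ Wfin := by
      rw [hWfin, Set.Finite.mem_toFinset]
      exact ⟨x⁻¹ * y, hball, rfl⟩
    have hrel : (gf i)⁻¹ * gf j = t ^ k * (x⁻¹ * y) * (t ^ m)⁻¹ := by
      rw [hxeq, hyeq]
      group
    have hleft : ((gf i)⁻¹ * gf j).left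
        = matAction M (Multiplicative.ofAdd k) (x⁻¹ * y).left := by
      rw [hrel, ← zpow_neg, ht, BPaux.tGen_zpow, BPaux.tGen_zpow, BPaux.left_conj]
    have h1 := BPaux.left_inv_mul M (gf i) (gf j)
    have h2 : matAction M ((gf i).right)⁻¹ ((gf i).left⁻¹ * (gf j).left)
        = matAction M (Multiplicative.ofAdd k) (x⁻¹ * y).left := h1.symm.trans hleft
    have h3 := congrArg (fun z => matAction M ((gf i).right) z) h2
    simp only [BPaux.matAction_matAction, mul_inv_cancel, map_one, MulAut.one_apply] at h3
    -- h3 : (gf i).left⁻¹ * (gf j).left = matAction M ((gf i).right * ofAdd k) ((x⁻¹*y).left)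
    have h4 := congrArg Multiplicative.toAdd h3
    rw [BPaux.toAdd_matAction] at h4
    simp only [toAdd_mul, toAdd_inv] at h4
    refine ⟨Multiplicative.toAdd (x⁻¹ * y).left, ⟨hwW, ?_⟩,
      Multiplicative.toAdd ((gf i).right) + k, ?_⟩
    · intro h0
      have hl1 : (x⁻¹ * y).left = 1 := by
        have := congrArg Multiplicative.ofAdd h0
        rwa [ofAdd_toAdd] at this
      have hggH : x⁻¹ * y ∈ H := by rw [hH]; exact (BPaux.mem_H_iff M _).mpr hl1
      have hmemH : (gf i)⁻¹ * gf j ∈ H := by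
        rw [hrel]
        exact mul_mem (mul_mem (zpow_mem (by rw [hH, ht]; exact Subgroup.mem_zpowers _) k)
          hggH) (inv_mem (zpow_mem (by rw [hH, ht]; exact Subgroup.mem_zpowers _) m))
      exact hne (by rw [hgfs i hi, hgfs j hj, leftCoset_eq_iff]; exact hmemH)
    · simp only [toAdd_ofAdd] at h4
      rw [← h4]
      abel
  set col : ℕ → ℕ → (Fin n → ℤ) := fun i j =>
    if h : i < j ∧ j < L.length then (KEY i j h.1 h.2).choose else 0 with hcol
  have hcolspec : ∀ i j, (h1 : i < j) → (h2 : j < L.length) →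
      (col i j ∈ Wfin ∧ col i j ≠ 0) ∧ ∃ p : ℤ,
        Multiplicative.toAdd (gf j).left - Multiplicative.toAdd (gf i).left
          = ((M ^ p : Matrix.GeneralLinearGroup (Fin n) ℤ) :
              Matrix (Fin n) (Fin n) ℤ).mulVec (col i j) := by
    intro i j h1 h2
    have hcc : col i j = (KEY i j h1 h2).choose := by
      rw [hcol]
      exact dif_pos ⟨h1, h2⟩
    rw [hcc]
    exact (KEY i j h1 h2).choose_spec
  have hram := hN Wfin le_rfl (Finset.range L.length) col
    (by rw [Finset.card_range, hlen]; exact hCcard)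
    (fun i _ j hj hij => (hcolspec i j hij (Finset.mem_range.mp hj)).1.1)
  obtain ⟨i, hiA, j, hjA, q, hqA, hij, hjq, hc1, hc2⟩ := hram
  have hjlen : j < L.length := Finset.mem_range.mp hjA
  have hqlen : q < L.length := Finset.mem_range.mp hqA
  obtain ⟨⟨hwW, hw0⟩, p₁, hp₁⟩ := hcolspec i j hij hjlen
  obtain ⟨-, p₂, hp₂⟩ := hcolspec j q hjq hqlen
  obtain ⟨-, p₃, hp₃⟩ := hcolspec i q (lt_trans hij hjq) hqlen
  rw [← hc1] at hp₂
  rw [← hc2] at hp₃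
  have htri : BPaux.castVec (((M ^ p₁ : Matrix.GeneralLinearGroup (Fin n) ℤ) :
        Matrix (Fin n) (Fin n) ℤ).mulVec (col i j))
      + BPaux.castVec (((M ^ p₂ : Matrix.GeneralLinearGroup (Fin n) ℤ) :
        Matrix (Fin n) (Fin n) ℤ).mulVec (col i j))
      = BPaux.castVec (((M ^ p₃ : Matrix.GeneralLinearGroup (Fin n) ℤ) :
        Matrix (Fin n) (Fin n) ℤ).mulVec (col i j)) := by
    rw [← hp₁, ← hp₂, ← hp₃]
    funext l
    simp only [BPaux.castVec, Pi.add_apply, Pi.sub_apply]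
    push_cast
    ring
  exact BPaux.no_triangle M hli hμ heig hw0 p₁ p₂ p₃ htri
end

section
/- In the Lie group Sol = ℝ² ⋊ ℝ with left-invariant Riemannian metric ds² = e^{2z}dx² + e^{−2z}dy² + dz², the distance between two points (x₁,y₁,0) and (x₂,y₂,0) in the plane z = 0 satisfies d_S((x₁,y₁,0),(x₂,y₂,0)) ≥ max{2·log|x₂−x₁|, 2·log|y₂−y₁|}. -/
private lemma cs2 (p q r s : ℝ) :
    p * r + q * s ≤ Real.sqrt (p ^ 2 + q ^ 2) * Real.sqrt (r ^ 2 + s ^ 2) := by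
  calc p * r + q * s ≤ |p * r + q * s| := le_abs_self _
    _ = Real.sqrt ((p * r + q * s) ^ 2) := (Real.sqrt_sq_eq_abs _).symm
    _ ≤ Real.sqrt ((p ^ 2 + q ^ 2) * (r ^ 2 + s ^ 2)) :=
        Real.sqrt_le_sqrt (by nlinarith [sq_nonneg (p * s - q * r)])
    _ = _ := Real.sqrt_mul (by positivity) _

private lemma sol_key (u v w : ℝ → ℝ)
    (hu : ContDiff ℝ 1 u) (hv : ContDiff ℝ 1 v) (hw : ContDiff ℝ 1 w)
    (hw0 : w 0 = 0) (hw1 : w 1 = 0) :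
    2 * Real.log |u 1 - u 0| ≤
      ∫ t in (0 : ℝ)..1, Real.sqrt (Real.exp (2 * w t) * (deriv u t) ^ 2 +
        Real.exp (-(2 * w t)) * (deriv v t) ^ 2 + (deriv w t) ^ 2) := by
  have hu' : ∀ t, HasDerivAt u (deriv u t) t :=
    fun t => (hu.differentiable one_ne_zero t).hasDerivAt
  have hw' : ∀ t, HasDerivAt w (deriv w t) t :=
    fun t => (hw.differentiable one_ne_zero t).hasDerivAt
  have hcu : Continuous (deriv u) := hu.continuous_deriv le_rfl
  have hcv : Continuous (deriv v) := hv.continuous_deriv le_rfl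
  have hcw : Continuous (deriv w) := hw.continuous_deriv le_rfl
  set s : ℝ → ℝ := fun t => Real.sqrt (Real.exp (2 * w t) * (deriv u t) ^ 2 +
        Real.exp (-(2 * w t)) * (deriv v t) ^ 2 + (deriv w t) ^ 2) with hs
  set D : ℝ → ℝ := fun t => (u t - u 0) ^ 2 + Real.exp (-(2 * w t)) with hDdef
  have hD : ∀ t, 0 < D t := fun t => by positivity
  set G : ℝ → ℝ := fun t =>
    (2 * (u t - u 0) * deriv u t + Real.exp (-(2 * w t)) * (-(2 * deriv w t))) / D t
      + deriv w t with hGdef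
  set F : ℝ → ℝ := fun t =>
    Real.log ((u t - u 0) ^ 2 + Real.exp (-(2 * w t))) + w t with hFdef
  have hF : ∀ t, HasDerivAt F (G t) t := by
    intro t
    have ha : HasDerivAt (fun t => (u t - u 0) ^ 2) (2 * (u t - u 0) * deriv u t) t := by
      have h := ((hu' t).sub_const (u 0)).pow 2
      refine h.congr_deriv ?_
      push_cast; ring
    have hb : HasDerivAt (fun t => Real.exp (-(2 * w t)))
        (Real.exp (-(2 * w t)) * (-(2 * deriv w t))) t :=
      (((hw' t).const_mul 2).neg).exp
    exact ((ha.add hb).log (hD t).ne').add (hw' t)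
  have hDc : Continuous D := by
    exact ((hu.continuous.sub continuous_const).pow 2).add
      (Real.continuous_exp.comp ((continuous_const.mul hw.continuous).neg))
  have hGc : Continuous G := by
    refine (Continuous.div ?_ hDc fun t => (hD t).ne').add hcw
    exact ((continuous_const.mul (hu.continuous.sub continuous_const)).mul hcu).add
      ((Real.continuous_exp.comp ((continuous_const.mul hw.continuous).neg)).mul
        ((continuous_const.mul hcw).neg))
  have hsc : Continuous s := by
    apply Continuous.sqrt
    exact (((Real.continuous_exp.comp (continuous_const.mul hw.continuous)).mul
      (hcu.pow 2)).add ((Real.continuous_exp.comp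
      ((continuous_const.mul hw.continuous).neg)).mul (hcv.pow 2))).add (hcw.pow 2)
  have hFTC : ∫ t in (0 : ℝ)..1, G t = F 1 - F 0 :=
    intervalIntegral.integral_eq_sub_of_hasDerivAt (fun t _ => hF t)
      (hGc.intervalIntegrable 0 1)
  have hmono : ∫ t in (0 : ℝ)..1, G t ≤ ∫ t in (0 : ℝ)..1, s t := by
    refine intervalIntegral.integral_mono_on (by norm_num)
      (hGc.intervalIntegrable 0 1) (hsc.intervalIntegrable 0 1) ?_
    intro t _
    set X := u t - u 0
    set E := Real.exp (-(2 * w t)) with hE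
    set a := deriv u t
    set c := deriv w t
    have hq : Real.sqrt (Real.exp (2 * w t) * a ^ 2 + c ^ 2) ≤ s t := by
      apply Real.sqrt_le_sqrt
      have : 0 ≤ Real.exp (-(2 * w t)) * (deriv v t) ^ 2 := by positivity
      linarith
    have hew : Real.exp (-(w t)) * Real.exp (w t) = 1 := by
      rw [← Real.exp_add]; simp
    have he2 : Real.exp (-(w t)) ^ 2 = E := by
      rw [sq, ← Real.exp_add, hE]; ring_nf
    have hp2 : Real.exp (w t) ^ 2 = Real.exp (2 * w t) := by
      rw [sq, ← Real.exp_add]; ring_nf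
    have hcs := cs2 (2 * X * Real.exp (-(w t))) (X ^ 2 - E) (Real.exp (w t) * a) c
    have hL : (2 * X * Real.exp (-(w t))) * (Real.exp (w t) * a) = 2 * X * a := by
      calc (2 * X * Real.exp (-(w t))) * (Real.exp (w t) * a)
          = 2 * X * a * (Real.exp (-(w t)) * Real.exp (w t)) := by ring
        _ = 2 * X * a := by rw [hew]; ring
    have hP : (2 * X * Real.exp (-(w t))) ^ 2 + (X ^ 2 - E) ^ 2 = D t ^ 2 := by
      have : (2 * X * Real.exp (-(w t))) ^ 2 = 4 * X ^ 2 * E := by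
        rw [mul_pow, he2]; ring
      have hDE : D t = X ^ 2 + E := rfl
      rw [this, hDE]; ring
    have hQ : (Real.exp (w t) * a) ^ 2 + c ^ 2 = Real.exp (2 * w t) * a ^ 2 + c ^ 2 := by
      rw [mul_pow, hp2]
    rw [hL, hP, hQ] at hcs
    have hDs : Real.sqrt (D t ^ 2) = D t := Real.sqrt_sq (hD t).le
    rw [hDs] at hcs
    -- G t ≤ s t
    have hGt : G t = (2 * X * a + c * (X ^ 2 - E)) / D t := by
      have hDE : D t = X ^ 2 + E := rfl
      show (2 * X * a + E * (-(2 * c))) / D t + c = _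
      rw [eq_div_iff (hD t).ne', add_mul, div_mul_cancel₀ _ (hD t).ne', hDE]
      ring
    rw [hGt, div_le_iff₀ (hD t)]
    calc 2 * X * a + c * (X ^ 2 - E)
        = 2 * X * a + (X ^ 2 - E) * c := by ring
      _ ≤ D t * Real.sqrt (Real.exp (2 * w t) * a ^ 2 + c ^ 2) := hcs
      _ ≤ D t * s t := mul_le_mul_of_nonneg_left hq (hD t).le
      _ = s t * D t := by ring
  have hF0 : F 0 = 0 := by simp [hFdef, hw0]
  have hF1 : F 1 = Real.log ((u 1 - u 0) ^ 2 + 1) := by simp [hFdef, hw1]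
  have hfinal : 2 * Real.log |u 1 - u 0| ≤ Real.log ((u 1 - u 0) ^ 2 + 1) := by
    rcases eq_or_ne (u 1 - u 0) 0 with h | h
    · simp [h]
    · have h1 : 2 * Real.log |u 1 - u 0| = Real.log ((u 1 - u 0) ^ 2) := by
        rw [← sq_abs, Real.log_pow]; push_cast; ring
      rw [h1]
      apply Real.log_le_log (by positivity)
      linarith
  calc 2 * Real.log |u 1 - u 0| ≤ Real.log ((u 1 - u 0) ^ 2 + 1) := hfinal
    _ = F 1 - F 0 := by rw [hF0, hF1]; ring
    _ = ∫ t in (0 : ℝ)..1, G t := hFTC.symm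
    _ ≤ ∫ t in (0 : ℝ)..1, s t := hmono


/-- In `Sol` with the left-invariant metric `ds² = e^{2z}dx² + e^{-2z}dy² + dz²`,
the length of any smooth path between two points of the plane `z = 0` is at least
`max (2 log|x₂ - x₁|) (2 log|y₂ - y₁|)`; hence so is the Sol distance. -/
theorem sol_distance_lower_bound (x y z : ℝ → ℝ)
    (hx : ContDiff ℝ 1 x) (hy : ContDiff ℝ 1 y) (hz : ContDiff ℝ 1 z)
    (hz0 : z 0 = 0) (hz1 : z 1 = 0) :
    max (2 * Real.log |x 1 - x 0|) (2 * Real.log |y 1 - y 0|) ≤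
      ∫ t in (0 : ℝ)..1, Real.sqrt (Real.exp (2 * z t) * (deriv x t) ^ 2 +
        Real.exp (-(2 * z t)) * (deriv y t) ^ 2 + (deriv z t) ^ 2) := by
  refine max_le (sol_key x y z hx hy hz hz0 hz1) ?_
  have h := sol_key y x (fun t => -z t) hy hx hz.neg (by simp [hz0]) (by simp [hz1])
  calc 2 * Real.log |y 1 - y 0|
      ≤ ∫ t in (0 : ℝ)..1, Real.sqrt (Real.exp (2 * -z t) * (deriv y t) ^ 2 +
          Real.exp (-(2 * -z t)) * (deriv x t) ^ 2 + (deriv (fun t => -z t) t) ^ 2) := h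
    _ = _ := by
        apply intervalIntegral.integral_congr
        intro t _
        simp only [deriv.fun_neg]
        rw [show (2 : ℝ) * -z t = -(2 * z t) by ring,
          show -(-(2 * z t)) = 2 * z t by ring]
        congr 1
        ring
end
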